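/- arXiv:1205.6248 — 5 statements merged into one kernel-verified Lean document; each statement's English description precedes it below -/
import Mathlib

section
/- Under the Lancaster construction f(x,y) = f₁(x) f₂(y) (1 + Σₙ ρₙ φₙ(x) ψₙ(y)) with Σₙ |ρₙ| cₙ dₙ ≤ 1, the function f is a probability density on ℝ², i.e. f ≥ 0 and ∬ f(x,y) dx dy = 1. -/
open MeasureTheory ProbabilityTheory Real
open scoped ENNReal

noncomputable def covar {Ω : Type*} [MeasurableSpace Ω] (μ : Measure Ω) (X Y : Ω → ℝ) : ℝ :=
  ∫ ω, (X ω - ∫ a, X a ∂μ) * (Y ω - ∫ a, Y a ∂μ) ∂μ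

noncomputable def pearson {Ω : Type*} [MeasurableSpace Ω] (μ : Measure Ω) (X Y : Ω → ℝ) : ℝ :=
  covar μ X Y / (Real.sqrt (variance X μ) * Real.sqrt (variance Y μ))

noncomputable def maxCorr {Ω : Type*} [MeasurableSpace Ω] (μ : Measure Ω) (X Y : Ω → ℝ) : ℝ :=
  sSup { r : ℝ | ∃ g₁ g₂ : ℝ → ℝ, Measurable g₁ ∧ Measurable g₂ ∧
    MemLp (g₁ ∘ X) 2 μ ∧ MemLp (g₂ ∘ Y) 2 μ ∧
    0 < variance (g₁ ∘ X) μ ∧ 0 < variance (g₂ ∘ Y) μ ∧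
    r = pearson μ (g₁ ∘ X) (g₂ ∘ Y) }

/-- `g` is a probability density on `ℝ` supported in `[a, b]`. -/
def IsDensityOn (g : ℝ → ℝ) (a b : ℝ) : Prop :=
  (∀ x, 0 ≤ g x) ∧ (∀ x, x ∉ Set.Icc a b → g x = 0) ∧ (∫ x, g x = 1)

/-- `φ` is the orthonormal polynomial system of the density `g`:
degree `n`, positive leading coefficients, orthonormal in `L²(g dx)`. -/
def OrthonormalPolys (g : ℝ → ℝ) (φ : ℕ → Polynomial ℝ) : Prop :=
  (∀ n, (φ n).natDegree = n) ∧ (∀ n, 0 < (φ n).leadingCoeff) ∧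
  (∀ m n, ∫ x, (φ m).eval x * (φ n).eval x * g x = if m = n then 1 else 0)

/-- The Lancaster density `f(x,y) = f₁(x) f₂(y) (1 + Σₙ≥₁ ρₙ φₙ(x) ψₙ(y))`. -/
noncomputable def lancaster (f₁ f₂ : ℝ → ℝ) (φ ψ : ℕ → Polynomial ℝ) (ρ : ℕ → ℝ)
    (x y : ℝ) : ℝ :=
  f₁ x * f₂ y * (1 + ∑' n : ℕ, ρ (n + 1) * (φ (n + 1)).eval x * (ψ (n + 1)).eval y)

-- auxiliary lemmas

lemma sup_bound (α ω : ℝ) (p : Polynomial ℝ) (x : ℝ) (hx : x ∈ Set.Icc α ω) :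
    |p.eval x| ≤ sSup ((fun x => |p.eval x|) '' Set.Icc α ω) :=
  le_csSup ((isCompact_Icc.image (p.continuous.abs)).bddAbove) ⟨x, hx, rfl⟩

lemma sup_nonneg' (α ω : ℝ) (h : α ≤ ω) (p : Polynomial ℝ) :
    0 ≤ sSup ((fun x => |p.eval x|) '' Set.Icc α ω) :=
  le_trans (abs_nonneg _) (sup_bound α ω p α (Set.left_mem_Icc.2 h))

lemma phi_zero_eq_one (f₁ : ℝ → ℝ) (hint : ∫ x, f₁ x = 1)
    (φ : ℕ → Polynomial ℝ) (hφ : OrthonormalPolys f₁ φ) (x : ℝ) :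
    (φ 0).eval x = 1 := by
  obtain ⟨hdeg, hlead, horth⟩ := hφ
  have h0 : φ 0 = Polynomial.C ((φ 0).coeff 0) :=
    Polynomial.eq_C_of_natDegree_eq_zero (hdeg 0)
  set a := (φ 0).coeff 0 with ha_def
  have ha : 0 < a := by
    have := hlead 0
    rwa [h0, Polynomial.leadingCoeff_C] at this
  have h00 := horth 0 0
  rw [if_pos rfl] at h00
  have heval : ∀ y : ℝ, (φ 0).eval y = a := by
    intro y; rw [h0, Polynomial.eval_C]
  simp only [heval] at h00
  have : ∫ y, a * a * f₁ y = (a * a) * ∫ y, f₁ y := integral_const_mul _ _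
  rw [this, hint, mul_one] at h00
  have hcase : (a - 1) * (a + 1) = 0 := by nlinarith
  rcases mul_eq_zero.mp hcase with h | h
  · rw [heval]; linarith
  · linarith

lemma int_phi_zero (f₁ : ℝ → ℝ) (hint : ∫ x, f₁ x = 1)
    (φ : ℕ → Polynomial ℝ) (hφ : OrthonormalPolys f₁ φ) (n : ℕ) :
    ∫ x, (φ (n + 1)).eval x * f₁ x = 0 := by
  have h := hφ.2.2 0 (n + 1)
  rw [if_neg (by omega)] at h
  have heval := phi_zero_eq_one f₁ hint φ hφ
  simp only [heval, one_mul] at h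
  exact h

/-- The Lancaster function is a probability density on `ℝ²`:
it is nonnegative and its double integral equals 1. -/
theorem stmt4 (α₁ ω₁ α₂ ω₂ : ℝ) (h₁ : α₁ < ω₁) (h₂ : α₂ < ω₂)
    (f₁ f₂ : ℝ → ℝ) (hf₁ : IsDensityOn f₁ α₁ ω₁) (hf₂ : IsDensityOn f₂ α₂ ω₂)
    (hm₁ : Measurable f₁) (hm₂ : Measurable f₂)
    (φ ψ : ℕ → Polynomial ℝ)
    (hφ : OrthonormalPolys f₁ φ) (hψ : OrthonormalPolys f₂ ψ)
    (c d : ℕ → ℝ)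
    (hc : ∀ n, c n = sSup ((fun x => |(φ n).eval x|) '' Set.Icc α₁ ω₁))
    (hd : ∀ n, d n = sSup ((fun y => |(ψ n).eval y|) '' Set.Icc α₂ ω₂))
    (ρ : ℕ → ℝ)
    (hsum : Summable fun n : ℕ => |ρ (n + 1)| * c (n + 1) * d (n + 1))
    (hρ : ∑' n : ℕ, |ρ (n + 1)| * c (n + 1) * d (n + 1) ≤ 1) :
    (∀ x y : ℝ, 0 ≤ lancaster f₁ f₂ φ ψ ρ x y) ∧
    (∫ p : ℝ × ℝ, lancaster f₁ f₂ φ ψ ρ p.1 p.2 = 1) := by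
  obtain ⟨hf₁0, hf₁supp, hf₁int⟩ := hf₁
  obtain ⟨hf₂0, hf₂supp, hf₂int⟩ := hf₂
  have hcb : ∀ n x, x ∈ Set.Icc α₁ ω₁ → |(φ n).eval x| ≤ c n := by
    intro n x hx; rw [hc n]; exact sup_bound _ _ _ _ hx
  have hdb : ∀ n y, y ∈ Set.Icc α₂ ω₂ → |(ψ n).eval y| ≤ d n := by
    intro n y hy; rw [hd n]; exact sup_bound _ _ _ _ hy
  have hc0 : ∀ n, 0 ≤ c n := fun n => by rw [hc n]; exact sup_nonneg' _ _ h₁.le _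
  have hd0 : ∀ n, 0 ≤ d n := fun n => by rw [hd n]; exact sup_nonneg' _ _ h₂.le _
  -- bound on each term of the series, valid whenever x, y are in the supports
  have hterm : ∀ (n : ℕ) (x y : ℝ), x ∈ Set.Icc α₁ ω₁ → y ∈ Set.Icc α₂ ω₂ →
      |ρ (n + 1) * (φ (n + 1)).eval x * (ψ (n + 1)).eval y|
        ≤ |ρ (n + 1)| * c (n + 1) * d (n + 1) := by
    intro n x y hx hy
    rw [abs_mul, abs_mul]
    exact mul_le_mul (mul_le_mul le_rfl (hcb _ _ hx) (abs_nonneg _) (abs_nonneg _))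
      (hdb _ _ hy) (abs_nonneg _) (mul_nonneg (abs_nonneg _) (hc0 _))
  have hsummable : ∀ (x y : ℝ), x ∈ Set.Icc α₁ ω₁ → y ∈ Set.Icc α₂ ω₂ →
      Summable fun n : ℕ => ρ (n + 1) * (φ (n + 1)).eval x * (ψ (n + 1)).eval y := by
    intro x y hx hy
    exact Summable.of_norm_bounded hsum
      (fun n => hterm n x y hx hy)
  have habsT : ∀ (x y : ℝ), x ∈ Set.Icc α₁ ω₁ → y ∈ Set.Icc α₂ ω₂ →
      |∑' n : ℕ, ρ (n + 1) * (φ (n + 1)).eval x * (ψ (n + 1)).eval y| ≤ 1 := by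
    intro x y hx hy
    calc |∑' n : ℕ, ρ (n + 1) * (φ (n + 1)).eval x * (ψ (n + 1)).eval y|
        ≤ ∑' n : ℕ, |ρ (n + 1) * (φ (n + 1)).eval x * (ψ (n + 1)).eval y| := by
          have hsabs : Summable fun n : ℕ =>
              |ρ (n + 1) * (φ (n + 1)).eval x * (ψ (n + 1)).eval y| :=
            Summable.of_nonneg_of_le (fun n => abs_nonneg _)
              (fun n => hterm n x y hx hy) hsum
          show ‖∑' n : ℕ, ρ (n + 1) * (φ (n + 1)).eval x * (ψ (n + 1)).eval y‖
            ≤ ∑' n : ℕ, ‖ρ (n + 1) * (φ (n + 1)).eval x * (ψ (n + 1)).eval y‖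
          exact norm_tsum_le_tsum_norm hsabs
      _ ≤ ∑' n : ℕ, |ρ (n + 1)| * c (n + 1) * d (n + 1) := by
          exact Summable.tsum_le_tsum (fun n => hterm n x y hx hy)
            (Summable.of_nonneg_of_le (fun n => abs_nonneg _) (fun n => hterm n x y hx hy) hsum)
            hsum
      _ ≤ 1 := hρ
  -- nonnegativity
  have hnonneg : ∀ x y : ℝ, 0 ≤ lancaster f₁ f₂ φ ψ ρ x y := by
    intro x y
    unfold lancaster
    by_cases hx : x ∈ Set.Icc α₁ ω₁
    · by_cases hy : y ∈ Set.Icc α₂ ω₂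
      · have := habsT x y hx hy
        have h1 : 0 ≤ 1 + ∑' n : ℕ, ρ (n + 1) * (φ (n + 1)).eval x * (ψ (n + 1)).eval y := by
          have := abs_le.mp this
          linarith [this.1]
        exact mul_nonneg (mul_nonneg (hf₁0 x) (hf₂0 y)) h1
      · rw [hf₂supp y hy]; ring_nf; simp
    · rw [hf₁supp x hx]; ring_nf; simp
  refine ⟨hnonneg, ?_⟩
  -- integrability of f₁, f₂
  have hInt₁ : Integrable f₁ := by
    by_contra h
    rw [integral_undef h] at hf₁int; norm_num at hf₁int
  have hInt₂ : Integrable f₂ := by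
    by_contra h
    rw [integral_undef h] at hf₂int; norm_num at hf₂int
  -- the family
  set A : ℕ → ℝ → ℝ := fun n => Nat.casesOn n f₁
    (fun m => fun x => ρ (m + 1) * (φ (m + 1)).eval x * f₁ x) with hA
  set B : ℕ → ℝ → ℝ := fun n => Nat.casesOn n f₂
    (fun m => fun y => (ψ (m + 1)).eval y * f₂ y) with hB
  set G : ℕ → ℝ × ℝ → ℝ := fun n p => A n p.1 * B n p.2 with hG
  -- pointwise bounds for A, B
  have hAbd : ∀ n x, |A (n + 1) x| ≤ (|ρ (n + 1)| * c (n + 1)) * f₁ x := by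
    intro n x
    by_cases hx : x ∈ Set.Icc α₁ ω₁
    · simp only [hA]
      rw [abs_mul, abs_mul, abs_of_nonneg (hf₁0 x)]
      exact mul_le_mul_of_nonneg_right
        (mul_le_mul le_rfl (hcb _ _ hx) (abs_nonneg _) (abs_nonneg _)) (hf₁0 x)
    · simp [hA, hf₁supp x hx, mul_nonneg (mul_nonneg (abs_nonneg _) (hc0 (n+1))) (hf₁0 x)]
  have hBbd : ∀ n y, |B (n + 1) y| ≤ d (n + 1) * f₂ y := by
    intro n y
    by_cases hy : y ∈ Set.Icc α₂ ω₂
    · simp only [hB]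
      rw [abs_mul, abs_of_nonneg (hf₂0 y)]
      exact mul_le_mul_of_nonneg_right (hdb _ _ hy) (hf₂0 y)
    · simp [hB, hf₂supp y hy, mul_nonneg (hd0 (n+1)) (hf₂0 y)]
  -- measurability
  have hAm : ∀ n, Measurable (A n) := by
    intro n
    cases n with
    | zero => exact hm₁
    | succ m =>
      exact (measurable_const.mul ((φ (m+1)).continuous.measurable)).mul hm₁
  have hBm : ∀ n, Measurable (B n) := by
    intro n
    cases n with
    | zero => exact hm₂
    | succ m => exact ((ψ (m+1)).continuous.measurable).mul hm₂
  -- integrability of A n, B n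
  have hAint : ∀ n, Integrable (A n) := by
    intro n
    cases n with
    | zero => exact hInt₁
    | succ m =>
      refine Integrable.mono (hInt₁.const_mul (|ρ (m + 1)| * c (m + 1)))
        ((hAm (m+1)).aestronglyMeasurable) (Filter.Eventually.of_forall fun x => ?_)
      rw [Real.norm_eq_abs, Real.norm_eq_abs,
        abs_of_nonneg (mul_nonneg (mul_nonneg (abs_nonneg _) (hc0 _)) (hf₁0 x))]
      exact hAbd m x
  have hBint : ∀ n, Integrable (B n) := by
    intro n
    cases n with
    | zero => exact hInt₂
    | succ m =>
      refine Integrable.mono (hInt₂.const_mul (d (m + 1)))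
        ((hBm (m+1)).aestronglyMeasurable) (Filter.Eventually.of_forall fun y => ?_)
      rw [Real.norm_eq_abs, Real.norm_eq_abs,
        abs_of_nonneg (mul_nonneg (hd0 _) (hf₂0 y))]
      exact hBbd m y
  have hGint : ∀ n, Integrable (G n) (volume : Measure (ℝ × ℝ)) := by
    intro n
    rw [Measure.volume_eq_prod]
    exact (hAint n).mul_prod (hBint n)
  -- norm integral bounds
  have hAnorm : ∀ n, ∫ x, |A (n + 1) x| ≤ |ρ (n + 1)| * c (n + 1) := by
    intro n
    calc ∫ x, |A (n + 1) x|
        ≤ ∫ x, (|ρ (n + 1)| * c (n + 1)) * f₁ x :=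
          integral_mono ((hAint (n+1)).abs) (hInt₁.const_mul _) (fun x => hAbd n x)
      _ = (|ρ (n + 1)| * c (n + 1)) * ∫ x, f₁ x := integral_const_mul _ _
      _ = |ρ (n + 1)| * c (n + 1) := by rw [hf₁int, mul_one]
  have hBnorm : ∀ n, ∫ y, |B (n + 1) y| ≤ d (n + 1) := by
    intro n
    calc ∫ y, |B (n + 1) y|
        ≤ ∫ y, d (n + 1) * f₂ y :=
          integral_mono ((hBint (n+1)).abs) (hInt₂.const_mul _) (fun y => hBbd n y)
      _ = d (n + 1) * ∫ y, f₂ y := integral_const_mul _ _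
      _ = d (n + 1) := by rw [hf₂int, mul_one]
  have hGnorm : ∀ n, ∫ p : ℝ × ℝ, ‖G (n + 1) p‖ ≤ |ρ (n + 1)| * c (n + 1) * d (n + 1) := by
    intro n
    have : ∫ p : ℝ × ℝ, ‖G (n + 1) p‖ = (∫ x, |A (n + 1) x|) * ∫ y, |B (n + 1) y| := by
      simp only [hG, Real.norm_eq_abs, abs_mul]
      rw [Measure.volume_eq_prod]
      exact integral_prod_mul (fun x => |A (n + 1) x|) (fun y => |B (n + 1) y|)
    rw [this]
    exact mul_le_mul (hAnorm n) (hBnorm n) (integral_nonneg fun y => abs_nonneg _)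
      (mul_nonneg (abs_nonneg _) (hc0 _))
  have hGnormSummable : Summable fun n => ∫ p : ℝ × ℝ, ‖G n p‖ := by
    rw [← summable_nat_add_iff 1]
    exact Summable.of_nonneg_of_le
      (fun n => integral_nonneg fun p => norm_nonneg _) (fun n => hGnorm n) hsum
  -- the key decomposition
  have hkey : ∀ p : ℝ × ℝ, lancaster f₁ f₂ φ ψ ρ p.1 p.2 = ∑' n, G n p := by
    intro ⟨x, y⟩
    by_cases hx : x ∈ Set.Icc α₁ ω₁
    · by_cases hy : y ∈ Set.Icc α₂ ω₂
      · have hs : Summable fun n => G (n + 1) (x, y) := by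
          apply Summable.of_norm_bounded
            (hsum.mul_right (f₁ x * f₂ y))
          intro n
          simp only [hG, Real.norm_eq_abs, abs_mul]
          calc |A (n+1) x| * |B (n+1) y|
              ≤ ((|ρ (n + 1)| * c (n + 1)) * f₁ x) * (d (n+1) * f₂ y) :=
                mul_le_mul (hAbd n x) (hBbd n y) (abs_nonneg _)
                  (mul_nonneg (mul_nonneg (abs_nonneg _) (hc0 _)) (hf₁0 x))
            _ = (|ρ (n + 1)| * c (n + 1) * d (n + 1)) * (f₁ x * f₂ y) := by ring
        have hfull : Summable fun n => G n (x, y) := (summable_nat_add_iff 1).mp hs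
        rw [Summable.tsum_eq_zero_add hfull]
        have h0 : G 0 (x, y) = f₁ x * f₂ y := rfl
        have hterm' : ∀ n : ℕ, G (n + 1) (x, y)
            = (f₁ x * f₂ y) * (ρ (n + 1) * (φ (n + 1)).eval x * (ψ (n + 1)).eval y) := by
          intro n; simp only [hG, hA, hB]; ring
        rw [h0]
        simp only [hterm']
        rw [tsum_mul_left]
        show f₁ x * f₂ y * (1 + _) = _
        ring
    -- degenerate cases: f₁ x = 0 or f₂ y = 0
      · have hzy := hf₂supp y hy
        have : ∀ n, G n (x, y) = 0 := by
          intro n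
          cases n with
          | zero => simp [hG, hA, hB, hzy]
          | succ m => simp [hG, hA, hB, hzy]
        rw [tsum_congr this, tsum_zero]
        unfold lancaster
        rw [hzy]; ring
    · have hzx := hf₁supp x hx
      have : ∀ n, G n (x, y) = 0 := by
        intro n
        cases n with
        | zero => simp [hG, hA, hB, hzx]
        | succ m => simp [hG, hA, hB, hzx]
      rw [tsum_congr this, tsum_zero]
      unfold lancaster
      rw [hzx]; ring
  -- compute the integral
  calc ∫ p : ℝ × ℝ, lancaster f₁ f₂ φ ψ ρ p.1 p.2
      = ∫ p : ℝ × ℝ, ∑' n, G n p := by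
        exact integral_congr_ae (Filter.Eventually.of_forall hkey)
    _ = ∑' n, ∫ p : ℝ × ℝ, G n p :=
        (integral_tsum_of_summable_integral_norm hGint hGnormSummable).symm
    _ = 1 := by
        have hGval : ∀ n : ℕ, ∫ p : ℝ × ℝ, G n p = if n = 0 then 1 else 0 := by
          intro n
          have hprod : ∫ p : ℝ × ℝ, G n p = (∫ x, A n x) * ∫ y, B n y := by
            rw [Measure.volume_eq_prod]; exact integral_prod_mul (A n) (B n)
          cases n with
          | zero => simp [hprod, hA, hB, hf₁int, hf₂int]
          | succ m =>
            rw [if_neg (by omega), hprod]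
            have hBz : ∫ y, B (m + 1) y = 0 := int_phi_zero f₂ hf₂int ψ hψ m
            rw [hBz, mul_zero]
        simp only [hGval]
        rw [tsum_ite_eq]
end

section
/- Let (X,Y) have the Lancaster density with coefficient sequence (ρₙ) satisfying Σₙ |ρₙ| cₙ dₙ ≤ 1 and ρ₁ ≠ 0. Then X and Y have strictly linear regressions on each other: there exist constants a₁ ≠ 0, a₀, b₁ ≠ 0, b₀ such that E(X|Y) = a₁ Y + a₀ a.s. and E(Y|X) = b₁ X + b₀ a.s. -/
open MeasureTheory ProbabilityTheory Real
open Filter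
open scoped ENNReal

private lemma IsDensityOn.integrable' {g : ℝ → ℝ} {a b : ℝ} (hf : IsDensityOn g a b) :
    Integrable g := by
  by_contra h
  have := hf.2.2
  rw [MeasureTheory.integral_undef h] at this
  norm_num at this

private lemma le_sSup_abs {a b : ℝ} (P : Polynomial ℝ) {x : ℝ} (hx : x ∈ Set.Icc a b) :
    |P.eval x| ≤ sSup ((fun x => |P.eval x|) '' Set.Icc a b) :=
  le_csSup (IsCompact.bddAbove (isCompact_Icc.image (P.continuous.abs))) ⟨x, hx, rfl⟩

private lemma sSup_abs_nonneg {a b : ℝ} (hab : a ≤ b) (P : Polynomial ℝ) :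
    0 ≤ sSup ((fun x => |P.eval x|) '' Set.Icc a b) :=
  le_trans (abs_nonneg _) (le_sSup_abs P ⟨le_rfl, hab⟩)

private lemma poly_mul_integrable {g : ℝ → ℝ} {a b : ℝ} (hf : IsDensityOn g a b)
    (hg : Measurable g) (P : Polynomial ℝ) :
    Integrable fun x => P.eval x * g x := by
  set M := sSup ((fun x => |P.eval x|) '' Set.Icc a b) with hM
  refine Integrable.mono' (hf.integrable'.const_mul M)
    ((P.continuous.measurable.mul hg).aestronglyMeasurable) (ae_of_all _ fun x => ?_)
  by_cases hx : x ∈ Set.Icc a b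
  · rw [Real.norm_eq_abs, abs_mul, abs_of_nonneg (hf.1 x)]
    exact mul_le_mul_of_nonneg_right (le_sSup_abs P hx) (hf.1 x)
  · simp [hf.2.1 x hx]

private lemma integral_abs_poly_mul_le {g : ℝ → ℝ} {a b : ℝ} (hf : IsDensityOn g a b)
    (hg : Measurable g) (P : Polynomial ℝ) {M : ℝ} (hM : ∀ x ∈ Set.Icc a b, |P.eval x| ≤ M) :
    ∫ x, |P.eval x * g x| ≤ M := by
  have h1 : ∀ x, |P.eval x * g x| ≤ M * g x := by
    intro x
    by_cases hx : x ∈ Set.Icc a b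
    · rw [abs_mul, abs_of_nonneg (hf.1 x)]
      exact mul_le_mul_of_nonneg_right (hM x hx) (hf.1 x)
    · simp [hf.2.1 x hx]
  calc ∫ x, |P.eval x * g x| ≤ ∫ x, M * g x :=
        integral_mono (poly_mul_integrable hf hg P).abs (hf.integrable'.const_mul M) h1
    _ = M := by rw [integral_const_mul, hf.2.2, mul_one]

private lemma phi_zero_eval {g : ℝ → ℝ} {a b : ℝ} (hf : IsDensityOn g a b)
    {φ : ℕ → Polynomial ℝ} (hφ : OrthonormalPolys g φ) (x : ℝ) : (φ 0).eval x = 1 := by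
  obtain ⟨r, hr⟩ := Polynomial.natDegree_eq_zero.mp (hφ.1 0)
  have hpos : 0 < r := by
    have := hφ.2.1 0
    rw [← hr] at this
    simpa using this
  have horr := hφ.2.2 0 0
  rw [← hr] at horr
  simp only [Polynomial.eval_C, if_pos rfl] at horr
  rw [integral_const_mul, hf.2.2, mul_one] at horr
  norm_num at horr
  have : r = 1 := by nlinarith
  rw [← hr, Polynomial.eval_C, this]

private lemma moment0 {g : ℝ → ℝ} {a b : ℝ} (hf : IsDensityOn g a b)
    {φ : ℕ → Polynomial ℝ} (hφ : OrthonormalPolys g φ) (n : ℕ) :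
    ∫ x, (φ n).eval x * g x = if n = 0 then 1 else 0 := by
  have h := hφ.2.2 0 n
  simp only [phi_zero_eval hf hφ, one_mul] at h
  rw [h]
  simp [eq_comm]

private lemma eval_deg_one {φ : ℕ → Polynomial ℝ} {g : ℝ → ℝ} (hφ : OrthonormalPolys g φ)
    (x : ℝ) : (φ 1).eval x = (φ 1).coeff 0 + (φ 1).leadingCoeff * x := by
  have h1 : (φ 1).natDegree = 1 := hφ.1 1
  rw [Polynomial.eval_eq_sum_range, h1]
  rw [Polynomial.leadingCoeff, h1]
  simp [Finset.sum_range_succ]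

private lemma moment1 {g : ℝ → ℝ} {a b : ℝ} (hf : IsDensityOn g a b) (hg : Measurable g)
    {φ : ℕ → Polynomial ℝ} (hφ : OrthonormalPolys g φ) (n : ℕ) :
    ∫ x, x * ((φ n).eval x * g x) =
      ((if n = 1 then 1 else 0) - (if n = 0 then 1 else 0) * (φ 1).coeff 0) /
        (φ 1).leadingCoeff := by
  set p1 := (φ 1).leadingCoeff with hp1def
  set A := (φ 1).coeff 0 with hAdef
  have hp1 : p1 ≠ 0 := ne_of_gt (hφ.2.1 1)
  have key : ∀ x : ℝ, x * ((φ n).eval x * g x)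
      = p1⁻¹ * ((φ 1).eval x * (φ n).eval x * g x) - A * p1⁻¹ * ((φ n).eval x * g x) := by
    intro x
    rw [eval_deg_one hφ x, ← hAdef, ← hp1def]
    field_simp
    ring
  have hi1 : Integrable fun x => (φ 1).eval x * (φ n).eval x * g x := by
    have h := poly_mul_integrable hf hg (φ 1 * φ n)
    simpa [Polynomial.eval_mul] using h
  have hi2 := poly_mul_integrable hf hg (φ n)
  have : ∫ x, x * ((φ n).eval x * g x)
      = ∫ x, (p1⁻¹ * ((φ 1).eval x * (φ n).eval x * g x) - A * p1⁻¹ * ((φ n).eval x * g x)) := by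
    exact integral_congr_ae (ae_of_all _ key)
  rw [this, integral_sub (hi1.const_mul _) (hi2.const_mul _), integral_const_mul,
    integral_const_mul, hφ.2.2 1 n, moment0 hf hφ n]
  by_cases hn1 : n = 1
  · subst hn1; norm_num
  · by_cases hn0 : n = 0
    · subst hn0; simp [hn1]; ring
    · simp [hn1, hn0, Ne.symm hn1]

section Lanc

variable {α₁ ω₁ α₂ ω₂ : ℝ} {f₁ f₂ : ℝ → ℝ} {φ ψ : ℕ → Polynomial ℝ} {c d ρ : ℕ → ℝ}

private lemma lancaster_eq (f₁ f₂ : ℝ → ℝ) (φ ψ : ℕ → Polynomial ℝ) (ρ : ℕ → ℝ) (x y : ℝ) :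
    lancaster f₁ f₂ φ ψ ρ x y = f₁ x * f₂ y
      + ∑' n : ℕ, ρ (n + 1) * (φ (n + 1)).eval x * (ψ (n + 1)).eval y * (f₁ x * f₂ y) := by
  unfold lancaster
  rw [mul_add, mul_one, ← tsum_mul_left]
  congr 1
  exact tsum_congr fun n => by ring

private lemma lancaster_swap (f₁ f₂ : ℝ → ℝ) (φ ψ : ℕ → Polynomial ℝ) (ρ : ℕ → ℝ) (x y : ℝ) :
    lancaster f₂ f₁ ψ φ ρ y x = lancaster f₁ f₂ φ ψ ρ x y := by
  unfold lancaster
  rw [show (∑' n : ℕ, ρ (n + 1) * (ψ (n + 1)).eval y * (φ (n + 1)).eval x)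
      = ∑' n : ℕ, ρ (n + 1) * (φ (n + 1)).eval x * (ψ (n + 1)).eval y from
    tsum_congr fun n => by ring]
  ring

private lemma lancaster_zero (hf₁ : IsDensityOn f₁ α₁ ω₁) (hf₂ : IsDensityOn f₂ α₂ ω₂)
    {x y : ℝ} (h : x ∉ Set.Icc α₁ ω₁ ∨ y ∉ Set.Icc α₂ ω₂) :
    lancaster f₁ f₂ φ ψ ρ x y = 0 := by
  rcases h with h | h
  · simp [lancaster, hf₁.2.1 x h]
  · simp [lancaster, hf₂.2.1 y h]

private lemma abs_tsum_le (h₁ : α₁ < ω₁) (h₂ : α₂ < ω₂)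
    (hc : ∀ n, c n = sSup ((fun x => |(φ n).eval x|) '' Set.Icc α₁ ω₁))
    (hd : ∀ n, d n = sSup ((fun y => |(ψ n).eval y|) '' Set.Icc α₂ ω₂))
    (hsum : Summable fun n : ℕ => |ρ (n + 1)| * c (n + 1) * d (n + 1))
    (hρ : ∑' n : ℕ, |ρ (n + 1)| * c (n + 1) * d (n + 1) ≤ 1)
    {x y : ℝ} (hx : x ∈ Set.Icc α₁ ω₁) (hy : y ∈ Set.Icc α₂ ω₂) :
    |∑' n : ℕ, ρ (n + 1) * (φ (n + 1)).eval x * (ψ (n + 1)).eval y| ≤ 1 := by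
  have h1 : ∀ n : ℕ, ‖ρ (n + 1) * (φ (n + 1)).eval x * (ψ (n + 1)).eval y‖
      ≤ |ρ (n + 1)| * c (n + 1) * d (n + 1) := by
    intro n
    rw [Real.norm_eq_abs, abs_mul, abs_mul]
    have hφb : |(φ (n + 1)).eval x| ≤ c (n + 1) := (hc (n + 1)) ▸ le_sSup_abs _ hx
    have hψb : |(ψ (n + 1)).eval y| ≤ d (n + 1) := (hd (n + 1)) ▸ le_sSup_abs _ hy
    have hc0 : 0 ≤ c (n + 1) := (hc (n + 1)) ▸ sSup_abs_nonneg h₁.le _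
    exact mul_le_mul (mul_le_mul_of_nonneg_left hφb (abs_nonneg _)) hψb (abs_nonneg _)
      (mul_nonneg (abs_nonneg _) hc0)
  exact le_trans (tsum_of_norm_bounded hsum.hasSum h1) hρ

private lemma lancaster_nonneg (h₁ : α₁ < ω₁) (h₂ : α₂ < ω₂)
    (hf₁ : IsDensityOn f₁ α₁ ω₁) (hf₂ : IsDensityOn f₂ α₂ ω₂)
    (hc : ∀ n, c n = sSup ((fun x => |(φ n).eval x|) '' Set.Icc α₁ ω₁))
    (hd : ∀ n, d n = sSup ((fun y => |(ψ n).eval y|) '' Set.Icc α₂ ω₂))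
    (hsum : Summable fun n : ℕ => |ρ (n + 1)| * c (n + 1) * d (n + 1))
    (hρ : ∑' n : ℕ, |ρ (n + 1)| * c (n + 1) * d (n + 1) ≤ 1)
    (x y : ℝ) : 0 ≤ lancaster f₁ f₂ φ ψ ρ x y := by
  by_cases hx : x ∈ Set.Icc α₁ ω₁
  · by_cases hy : y ∈ Set.Icc α₂ ω₂
    · have h := abs_tsum_le h₁ h₂ hc hd hsum hρ hx hy
      have h' := abs_le.mp h
      unfold lancaster
      have := mul_nonneg (hf₁.1 x) (hf₂.1 y)
      nlinarith [h'.1]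
    · rw [lancaster_zero hf₁ hf₂ (Or.inr hy)]
  · rw [lancaster_zero hf₁ hf₂ (Or.inl hx)]

private lemma lancaster_le (h₁ : α₁ < ω₁) (h₂ : α₂ < ω₂)
    (hf₁ : IsDensityOn f₁ α₁ ω₁) (hf₂ : IsDensityOn f₂ α₂ ω₂)
    (hc : ∀ n, c n = sSup ((fun x => |(φ n).eval x|) '' Set.Icc α₁ ω₁))
    (hd : ∀ n, d n = sSup ((fun y => |(ψ n).eval y|) '' Set.Icc α₂ ω₂))
    (hsum : Summable fun n : ℕ => |ρ (n + 1)| * c (n + 1) * d (n + 1))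
    (hρ : ∑' n : ℕ, |ρ (n + 1)| * c (n + 1) * d (n + 1) ≤ 1)
    (x y : ℝ) : lancaster f₁ f₂ φ ψ ρ x y ≤ 2 * (f₁ x * f₂ y) := by
  by_cases hx : x ∈ Set.Icc α₁ ω₁
  · by_cases hy : y ∈ Set.Icc α₂ ω₂
    · have h := abs_tsum_le h₁ h₂ hc hd hsum hρ hx hy
      have h' := abs_le.mp h
      unfold lancaster
      have := mul_nonneg (hf₁.1 x) (hf₂.1 y)
      nlinarith [h'.2]
    · rw [lancaster_zero hf₁ hf₂ (Or.inr hy)]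
      exact mul_nonneg (by norm_num) (mul_nonneg (hf₁.1 x) (hf₂.1 y))
  · rw [lancaster_zero hf₁ hf₂ (Or.inl hx)]
    exact mul_nonneg (by norm_num) (mul_nonneg (hf₁.1 x) (hf₂.1 y))

private lemma lancaster_measurable (h₁ : α₁ < ω₁) (h₂ : α₂ < ω₂)
    (hf₁ : IsDensityOn f₁ α₁ ω₁) (hf₂ : IsDensityOn f₂ α₂ ω₂)
    (hm₁ : Measurable f₁) (hm₂ : Measurable f₂)
    (hc : ∀ n, c n = sSup ((fun x => |(φ n).eval x|) '' Set.Icc α₁ ω₁))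
    (hd : ∀ n, d n = sSup ((fun y => |(ψ n).eval y|) '' Set.Icc α₂ ω₂))
    (hsum : Summable fun n : ℕ => |ρ (n + 1)| * c (n + 1) * d (n + 1)) :
    Measurable fun p : ℝ × ℝ => lancaster f₁ f₂ φ ψ ρ p.1 p.2 := by
  set G : ℕ → ℝ × ℝ → ℝ := fun n p =>
    ρ (n + 1) * (φ (n + 1)).eval p.1 * (ψ (n + 1)).eval p.2 * (f₁ p.1 * f₂ p.2) with hG
  have hGmeas : ∀ n, Measurable (G n) := by
    intro n
    exact (((measurable_const.mul ((φ (n+1)).continuous.measurable.comp measurable_fst)).mul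
      ((ψ (n+1)).continuous.measurable.comp measurable_snd)).mul
      ((hm₁.comp measurable_fst).mul (hm₂.comp measurable_snd)))
  have hGsum : ∀ p : ℝ × ℝ, Summable fun n => G n p := by
    intro p
    by_cases hx : p.1 ∈ Set.Icc α₁ ω₁
    · by_cases hy : p.2 ∈ Set.Icc α₂ ω₂
      · apply Summable.of_norm
        refine Summable.of_nonneg_of_le (fun n => norm_nonneg _) (fun n => ?_)
          (hsum.mul_right (f₁ p.1 * f₂ p.2))
        rw [hG]
        simp only [Real.norm_eq_abs, abs_mul]
        rw [abs_of_nonneg (hf₁.1 _), abs_of_nonneg (hf₂.1 _)]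
        have hφb : |(φ (n + 1)).eval p.1| ≤ c (n + 1) := (hc (n + 1)) ▸ le_sSup_abs _ hx
        have hψb : |(ψ (n + 1)).eval p.2| ≤ d (n + 1) := (hd (n + 1)) ▸ le_sSup_abs _ hy
        have hc0 : 0 ≤ c (n + 1) := (hc (n + 1)) ▸ sSup_abs_nonneg h₁.le _
        refine mul_le_mul_of_nonneg_right ?_ (mul_nonneg (hf₁.1 _) (hf₂.1 _))
        exact mul_le_mul (mul_le_mul_of_nonneg_left hφb (abs_nonneg _)) hψb (abs_nonneg _)
          (mul_nonneg (abs_nonneg _) hc0)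
      · have : (fun n => G n p) = fun _ => 0 := by
          funext n; simp [hG, hf₂.2.1 _ hy]
        rw [this]; exact summable_zero
    · have : (fun n => G n p) = fun _ => 0 := by
        funext n; simp [hG, hf₁.2.1 _ hx]
      rw [this]; exact summable_zero
  have heq : (fun p : ℝ × ℝ => lancaster f₁ f₂ φ ψ ρ p.1 p.2)
      = fun p => f₁ p.1 * f₂ p.2 + ∑' n, G n p := by
    funext p; exact lancaster_eq f₁ f₂ φ ψ ρ p.1 p.2
  rw [heq]
  refine ((hm₁.comp measurable_fst).mul (hm₂.comp measurable_snd)).add ?_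
  apply measurable_of_tendsto_metrizable (f := fun N p => ∑ n ∈ Finset.range N, G n p)
  · exact fun N => Finset.measurable_sum _ fun n _ => hGmeas n
  · rw [tendsto_pi_nhds]
    exact fun p => (hGsum p).hasSum.tendsto_sum_nat

end Lanc

private lemma inner_integral {α₁ ω₁ α₂ ω₂ : ℝ} {f₁ f₂ : ℝ → ℝ} {φ ψ : ℕ → Polynomial ℝ}
    {c d ρ : ℕ → ℝ} (h₁ : α₁ < ω₁) (h₂ : α₂ < ω₂)
    (hf₁ : IsDensityOn f₁ α₁ ω₁) (hf₂ : IsDensityOn f₂ α₂ ω₂)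
    (hm₁ : Measurable f₁) (hm₂ : Measurable f₂)
    (hc : ∀ n, c n = sSup ((fun x => |(φ n).eval x|) '' Set.Icc α₁ ω₁))
    (hd : ∀ n, d n = sSup ((fun y => |(ψ n).eval y|) '' Set.Icc α₂ ω₂))
    (hsum : Summable fun n : ℕ => |ρ (n + 1)| * c (n + 1) * d (n + 1))
    (hρ : ∑' n : ℕ, |ρ (n + 1)| * c (n + 1) * d (n + 1) ≤ 1)
    (Q : Polynomial ℝ) (y : ℝ) :
    ∫ x, Q.eval x * lancaster f₁ f₂ φ ψ ρ x y
      = (∫ x, Q.eval x * f₁ x) * f₂ y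
        + ∑' n : ℕ, (ρ (n + 1) * (ψ (n + 1)).eval y * f₂ y)
            * ∫ x, Q.eval x * ((φ (n + 1)).eval x * f₁ x) := by
  by_cases hy : y ∈ Set.Icc α₂ ω₂
  case neg =>
    have h0 : f₂ y = 0 := hf₂.2.1 y hy
    simp [lancaster, h0]
  case pos =>
  set MQ := sSup ((fun x => |Q.eval x|) '' Set.Icc α₁ ω₁) with hMQ
  have hMQb : ∀ x ∈ Set.Icc α₁ ω₁, |Q.eval x| ≤ MQ := fun x hx => le_sSup_abs Q hx
  have hMQ0 : 0 ≤ MQ := sSup_abs_nonneg h₁.le Q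
  have hf₂y : 0 ≤ f₂ y := hf₂.1 y
  have hdb : ∀ n, |(ψ n).eval y| ≤ d n := fun n => (hd n) ▸ le_sSup_abs _ hy
  have hd0 : ∀ n, 0 ≤ d n := fun n => (hd n) ▸ sSup_abs_nonneg h₂.le _
  have hc0 : ∀ n, 0 ≤ c n := fun n => (hc n) ▸ sSup_abs_nonneg h₁.le _
  have hcb : ∀ n, ∀ x ∈ Set.Icc α₁ ω₁, |(φ n).eval x| ≤ c n :=
    fun n x hx => (hc n) ▸ le_sSup_abs _ hx
  set W : ℕ → ℝ → ℝ := fun n x =>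
    ρ (n + 1) * (ψ (n + 1)).eval y * f₂ y * (Q.eval x * ((φ (n + 1)).eval x * f₁ x)) with hW
  have hWint : ∀ n, Integrable (W n) := by
    intro n
    have h := (poly_mul_integrable hf₁ hm₁ (Q * φ (n + 1))).const_mul
      (ρ (n + 1) * (ψ (n + 1)).eval y * f₂ y)
    refine h.congr (ae_of_all _ fun x => ?_)
    simp only [hW, Polynomial.eval_mul]
    ring
  have hWnorm : ∀ n, ∫ x, ‖W n x‖ ≤ (MQ * f₂ y) * (|ρ (n + 1)| * c (n + 1) * d (n + 1)) := by
    intro n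
    have e1 : ∀ x, ‖W n x‖
        = |ρ (n + 1) * (ψ (n + 1)).eval y * f₂ y| * |(Q * φ (n + 1)).eval x * f₁ x| := by
      intro x
      simp only [hW, Real.norm_eq_abs, Polynomial.eval_mul, abs_mul]
      ring
    have e2 : ∫ x, ‖W n x‖
        = |ρ (n + 1) * (ψ (n + 1)).eval y * f₂ y| * ∫ x, |(Q * φ (n + 1)).eval x * f₁ x| := by
      rw [← integral_const_mul]
      exact integral_congr_ae (ae_of_all _ e1)
    rw [e2]
    have e3 : ∫ x, |(Q * φ (n + 1)).eval x * f₁ x| ≤ MQ * c (n + 1) := by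
      apply integral_abs_poly_mul_le hf₁ hm₁
      intro x hx
      rw [Polynomial.eval_mul, abs_mul]
      exact mul_le_mul (hMQb x hx) (hcb (n + 1) x hx) (abs_nonneg _) hMQ0
    have e4 : |ρ (n + 1) * (ψ (n + 1)).eval y * f₂ y| ≤ |ρ (n + 1)| * d (n + 1) * f₂ y := by
      rw [abs_mul, abs_mul, abs_of_nonneg hf₂y]
      exact mul_le_mul_of_nonneg_right
        (mul_le_mul_of_nonneg_left (hdb _) (abs_nonneg _)) hf₂y
    calc |ρ (n + 1) * (ψ (n + 1)).eval y * f₂ y| * ∫ x, |(Q * φ (n + 1)).eval x * f₁ x|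
        ≤ (|ρ (n + 1)| * d (n + 1) * f₂ y) * (MQ * c (n + 1)) :=
          mul_le_mul e4 e3 (integral_nonneg fun x => abs_nonneg _)
            (mul_nonneg (mul_nonneg (abs_nonneg _) (hd0 _)) hf₂y)
      _ = (MQ * f₂ y) * (|ρ (n + 1)| * c (n + 1) * d (n + 1)) := by ring
  have hWsum : Summable fun n => ∫ x, ‖W n x‖ :=
    Summable.of_nonneg_of_le (fun n => integral_nonneg fun x => norm_nonneg _) hWnorm
      (hsum.mul_left (MQ * f₂ y))
  have hswap := MeasureTheory.integral_tsum_of_summable_integral_norm hWint hWsum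
  have hpt : ∀ x, Q.eval x * lancaster f₁ f₂ φ ψ ρ x y
      = Q.eval x * (f₁ x * f₂ y) + ∑' n, W n x := by
    intro x
    rw [lancaster_eq, mul_add, ← tsum_mul_left]
    congr 1
    refine tsum_congr fun n => ?_
    simp only [hW]
    ring
  have hQL : Integrable fun x => Q.eval x * lancaster f₁ f₂ φ ψ ρ x y := by
    have hLm : Measurable fun x : ℝ => lancaster f₁ f₂ φ ψ ρ x y :=
      (lancaster_measurable h₁ h₂ hf₁ hf₂ hm₁ hm₂ hc hd hsum).comp
        (measurable_id.prodMk measurable_const)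
    refine Integrable.mono' (hf₁.integrable'.const_mul (MQ * (2 * f₂ y)))
      ((Q.continuous.measurable.mul hLm).aestronglyMeasurable) (ae_of_all _ fun x => ?_)
    rw [Real.norm_eq_abs, abs_mul]
    by_cases hx : x ∈ Set.Icc α₁ ω₁
    · have hnn := lancaster_nonneg h₁ h₂ hf₁ hf₂ hc hd hsum hρ x y
      have hle := lancaster_le h₁ h₂ hf₁ hf₂ hc hd hsum hρ x y
      rw [abs_of_nonneg hnn]
      calc |Q.eval x| * lancaster f₁ f₂ φ ψ ρ x y ≤ MQ * (2 * (f₁ x * f₂ y)) :=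
            mul_le_mul (hMQb x hx) hle hnn hMQ0
        _ = MQ * (2 * f₂ y) * f₁ x := by ring
    · rw [lancaster_zero hf₁ hf₂ (Or.inl hx), hf₁.2.1 x hx]
      simp
  have hQF : Integrable fun x => Q.eval x * (f₁ x * f₂ y) := by
    have h := (poly_mul_integrable hf₁ hm₁ Q).mul_const (f₂ y)
    exact h.congr (ae_of_all _ fun x => by ring)
  have hTS : Integrable fun x => ∑' n, W n x := by
    refine (hQL.sub hQF).congr (ae_of_all _ fun x => ?_)
    simp only [Pi.sub_apply]
    rw [hpt x]
    ring
  calc ∫ x, Q.eval x * lancaster f₁ f₂ φ ψ ρ x y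
      = ∫ x, (Q.eval x * (f₁ x * f₂ y) + ∑' n, W n x) := integral_congr_ae (ae_of_all _ hpt)
    _ = (∫ x, Q.eval x * (f₁ x * f₂ y)) + ∫ x, ∑' n, W n x := integral_add hQF hTS
    _ = (∫ x, Q.eval x * f₁ x) * f₂ y
        + ∑' n : ℕ, (ρ (n + 1) * (ψ (n + 1)).eval y * f₂ y)
            * ∫ x, Q.eval x * ((φ (n + 1)).eval x * f₁ x) := by
      rw [← hswap]
      congr 1
      · rw [← integral_mul_const]
        exact integral_congr_ae (ae_of_all _ fun x => by ring)
      · refine tsum_congr fun n => ?_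
        simp only [hW]
        exact integral_const_mul _ _

private lemma prod_integrable {α₁ ω₁ α₂ ω₂ : ℝ} {f₁ f₂ : ℝ → ℝ} {φ ψ : ℕ → Polynomial ℝ}
    {c d ρ : ℕ → ℝ} (h₁ : α₁ < ω₁) (h₂ : α₂ < ω₂)
    (hf₁ : IsDensityOn f₁ α₁ ω₁) (hf₂ : IsDensityOn f₂ α₂ ω₂)
    (hm₁ : Measurable f₁) (hm₂ : Measurable f₂)
    (hc : ∀ n, c n = sSup ((fun x => |(φ n).eval x|) '' Set.Icc α₁ ω₁))
    (hd : ∀ n, d n = sSup ((fun y => |(ψ n).eval y|) '' Set.Icc α₂ ω₂))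
    (hsum : Summable fun n : ℕ => |ρ (n + 1)| * c (n + 1) * d (n + 1))
    (hρ : ∑' n : ℕ, |ρ (n + 1)| * c (n + 1) * d (n + 1) ≤ 1)
    {h : ℝ × ℝ → ℝ} (hh : Measurable h) {C : ℝ}
    (hC : ∀ p : ℝ × ℝ, p.1 ∈ Set.Icc α₁ ω₁ → p.2 ∈ Set.Icc α₂ ω₂ → |h p| ≤ C) :
    Integrable (fun p : ℝ × ℝ => lancaster f₁ f₂ φ ψ ρ p.1 p.2 * h p)
      ((volume : Measure ℝ).prod (volume : Measure ℝ)) := by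
  have hC0 : 0 ≤ C := le_trans (abs_nonneg _)
    (hC (α₁, α₂) ⟨le_rfl, h₁.le⟩ ⟨le_rfl, h₂.le⟩)
  have hdom : Integrable (fun p : ℝ × ℝ => (2 * C) * (f₁ p.1 * f₂ p.2))
      ((volume : Measure ℝ).prod (volume : Measure ℝ)) :=
    (hf₁.integrable'.mul_prod hf₂.integrable').const_mul _
  refine hdom.mono'
    (((lancaster_measurable h₁ h₂ hf₁ hf₂ hm₁ hm₂ hc hd hsum).mul hh).aestronglyMeasurable)
    (ae_of_all _ fun p => ?_)
  rw [Real.norm_eq_abs, abs_mul]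
  by_cases hx : p.1 ∈ Set.Icc α₁ ω₁
  · by_cases hy : p.2 ∈ Set.Icc α₂ ω₂
    · have hnn := lancaster_nonneg h₁ h₂ hf₁ hf₂ hc hd hsum hρ p.1 p.2
      have hle := lancaster_le h₁ h₂ hf₁ hf₂ hc hd hsum hρ p.1 p.2
      rw [abs_of_nonneg hnn]
      calc lancaster f₁ f₂ φ ψ ρ p.1 p.2 * |h p| ≤ (2 * (f₁ p.1 * f₂ p.2)) * C :=
            mul_le_mul hle (hC p hx hy) (abs_nonneg _)
              (mul_nonneg (by norm_num) (mul_nonneg (hf₁.1 _) (hf₂.1 _)))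
        _ = 2 * C * (f₁ p.1 * f₂ p.2) := by ring
    · rw [lancaster_zero hf₁ hf₂ (Or.inr hy), abs_zero, zero_mul]
      exact mul_nonneg (by linarith) (mul_nonneg (hf₁.1 _) (hf₂.1 _))
  · rw [lancaster_zero hf₁ hf₂ (Or.inl hx), abs_zero, zero_mul]
    exact mul_nonneg (by linarith) (mul_nonneg (hf₁.1 _) (hf₂.1 _))

private lemma key_int {Ω : Type*} [MeasurableSpace Ω] (μ : Measure Ω) {X Y : Ω → ℝ}
    (hX : Measurable X) (hY : Measurable Y) {D : ℝ × ℝ → ℝ} (hD : Measurable D)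
    (hD0 : ∀ p, 0 ≤ D p)
    (hjoint : Measure.map (fun ω => (X ω, Y ω)) μ
      = (volume : Measure (ℝ × ℝ)).withDensity fun p => ENNReal.ofReal (D p))
    (h : ℝ × ℝ → ℝ) (hh : Measurable h) :
    ∫ ω, h (X ω, Y ω) ∂μ = ∫ p : ℝ × ℝ, D p * h p := by
  rw [← integral_map (hX.prodMk hY).aemeasurable hh.aestronglyMeasurable, hjoint]
  rw [show (fun p : ℝ × ℝ => ENNReal.ofReal (D p))
      = fun p => (((D p).toNNReal : NNReal) : ℝ≥0∞) from rfl,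
    integral_withDensity_eq_integral_smul hD.real_toNNReal h]
  refine integral_congr_ae (ae_of_all _ fun p => ?_)
  simp [NNReal.smul_def, Real.coe_toNNReal _ (hD0 p)]

private lemma map_swap_eq {Ω : Type*} [MeasurableSpace Ω] (μ : Measure Ω) {X Y : Ω → ℝ}
    (hX : Measurable X) (hY : Measurable Y) {D : ℝ × ℝ → ℝ}
    (hjoint : Measure.map (fun ω => (X ω, Y ω)) μ
      = (volume : Measure (ℝ × ℝ)).withDensity fun p => ENNReal.ofReal (D p)) :
    Measure.map (fun ω => (Y ω, X ω)) μ
      = (volume : Measure (ℝ × ℝ)).withDensity fun p => ENNReal.ofReal (D (p.2, p.1)) := by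
  have hcomp : (fun ω => (Y ω, X ω)) = Prod.swap ∘ (fun ω => (X ω, Y ω)) := rfl
  rw [hcomp, ← Measure.map_map measurable_swap (hX.prodMk hY), hjoint]
  ext s hs
  rw [Measure.map_apply measurable_swap hs,
    withDensity_apply _ (hs.preimage measurable_swap), withDensity_apply _ hs]
  have mp : MeasurePreserving (Prod.swap : ℝ × ℝ → ℝ × ℝ)
      (volume : Measure (ℝ × ℝ)) (volume : Measure (ℝ × ℝ)) := by
    rw [Measure.volume_eq_prod]
    exact Measure.measurePreserving_swap
  exact mp.setLIntegral_comp_preimage_emb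
    (MeasurableEquiv.prodComm : ℝ × ℝ ≃ᵐ ℝ × ℝ).measurableEmbedding
    (fun p => ENNReal.ofReal (D (p.2, p.1))) s

private lemma box_ae {Ω : Type*} [MeasurableSpace Ω] (μ : Measure Ω) {X Y : Ω → ℝ}
    (hX : Measurable X) (hY : Measurable Y) {α₁ ω₁ α₂ ω₂ : ℝ} {D : ℝ × ℝ → ℝ}
    (hDz : ∀ p : ℝ × ℝ, p.1 ∉ Set.Icc α₁ ω₁ ∨ p.2 ∉ Set.Icc α₂ ω₂ → D p = 0)
    (hjoint : Measure.map (fun ω => (X ω, Y ω)) μ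
      = (volume : Measure (ℝ × ℝ)).withDensity fun p => ENNReal.ofReal (D p)) :
    ∀ᵐ ω ∂μ, X ω ∈ Set.Icc α₁ ω₁ ∧ Y ω ∈ Set.Icc α₂ ω₂ := by
  have hbox : MeasurableSet (Set.Icc α₁ ω₁ ×ˢ Set.Icc α₂ ω₂) :=
    measurableSet_Icc.prod measurableSet_Icc
  rw [ae_iff]
  have hset : {ω | ¬(X ω ∈ Set.Icc α₁ ω₁ ∧ Y ω ∈ Set.Icc α₂ ω₂)}
      = (fun ω => (X ω, Y ω)) ⁻¹' (Set.Icc α₁ ω₁ ×ˢ Set.Icc α₂ ω₂)ᶜ := by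
    ext ω
    simp only [Set.mem_setOf_eq, Set.mem_preimage, Set.mem_compl_iff, Set.mem_prod]
  rw [hset, ← Measure.map_apply (hX.prodMk hY) hbox.compl, hjoint,
    withDensity_apply _ hbox.compl]
  have hz : ∀ p ∈ (Set.Icc α₁ ω₁ ×ˢ Set.Icc α₂ ω₂)ᶜ, ENNReal.ofReal (D p) = 0 := by
    intro p hp
    rw [Set.mem_compl_iff, Set.mem_prod, not_and_or] at hp
    rw [hDz p hp]
    simp
  rw [setLIntegral_congr_fun (g := fun _ => 0) hbox.compl hz]
  simp

private lemma bdd_integrable {Ω : Type*} [MeasurableSpace Ω] (μ : Measure Ω)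
    [IsProbabilityMeasure μ] {Z : Ω → ℝ} (hZ : Measurable Z) {K : ℝ}
    (hK : ∀ᵐ ω ∂μ, |Z ω| ≤ K) : Integrable Z μ :=
  Integrable.mono' (integrable_const K) hZ.aestronglyMeasurable (by simpa using hK)

private lemma main_half {Ω : Type*} [MeasurableSpace Ω] (μ : Measure Ω) [IsProbabilityMeasure μ]
    (X Y : Ω → ℝ) (hX : Measurable X) (hY : Measurable Y)
    (α₁ ω₁ α₂ ω₂ : ℝ) (h₁ : α₁ < ω₁) (h₂ : α₂ < ω₂)
    (f₁ f₂ : ℝ → ℝ) (hf₁ : IsDensityOn f₁ α₁ ω₁) (hf₂ : IsDensityOn f₂ α₂ ω₂)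
    (hm₁ : Measurable f₁) (hm₂ : Measurable f₂)
    (φ ψ : ℕ → Polynomial ℝ)
    (hφ : OrthonormalPolys f₁ φ) (hψ : OrthonormalPolys f₂ ψ)
    (c d : ℕ → ℝ)
    (hc : ∀ n, c n = sSup ((fun x => |(φ n).eval x|) '' Set.Icc α₁ ω₁))
    (hd : ∀ n, d n = sSup ((fun y => |(ψ n).eval y|) '' Set.Icc α₂ ω₂))
    (ρ : ℕ → ℝ)
    (hsum : Summable fun n : ℕ => |ρ (n + 1)| * c (n + 1) * d (n + 1))
    (hρ : ∑' n : ℕ, |ρ (n + 1)| * c (n + 1) * d (n + 1) ≤ 1)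
    (hjoint : Measure.map (fun ω => (X ω, Y ω)) μ =
      (volume : Measure (ℝ × ℝ)).withDensity
        (fun p => ENNReal.ofReal (lancaster f₁ f₂ φ ψ ρ p.1 p.2)))
    (hρ₁ : ρ 1 ≠ 0) :
    ∃ a₁ a₀ : ℝ, a₁ ≠ 0 ∧
      (μ[X | MeasurableSpace.comap Y inferInstance] =ᵐ[μ] fun ω => a₁ * Y ω + a₀) := by
  have hLmeas : Measurable fun p : ℝ × ℝ => lancaster f₁ f₂ φ ψ ρ p.1 p.2 :=
    lancaster_measurable h₁ h₂ hf₁ hf₂ hm₁ hm₂ hc hd hsum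
  have hL0 : ∀ p : ℝ × ℝ, 0 ≤ lancaster f₁ f₂ φ ψ ρ p.1 p.2 :=
    fun p => lancaster_nonneg h₁ h₂ hf₁ hf₂ hc hd hsum hρ p.1 p.2
  have hp1pos : 0 < (φ 1).leadingCoeff := hφ.2.1 1
  have hq1pos : 0 < (ψ 1).leadingCoeff := hψ.2.1 1
  set p1 := (φ 1).leadingCoeff with hp1
  set q1 := (ψ 1).leadingCoeff with hq1
  set A := (φ 1).coeff 0 with hA
  set B0 := (ψ 1).coeff 0 with hB0
  set a₁ := ρ 1 * q1 / p1 with ha₁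
  set a₀ := (ρ 1 * B0 - A) / p1 with ha₀
  refine ⟨a₁, a₀, div_ne_zero (mul_ne_zero hρ₁ hq1pos.ne') hp1pos.ne', ?_⟩
  -- inner integrals
  have inner1 : ∀ y : ℝ, ∫ x, lancaster f₁ f₂ φ ψ ρ x y = f₂ y := by
    intro y
    have h := inner_integral h₁ h₂ hf₁ hf₂ hm₁ hm₂ hc hd hsum hρ 1 y
    simp only [Polynomial.eval_one, one_mul] at h
    rw [h, hf₁.2.2, one_mul]
    have hz : ∀ n : ℕ,
        (ρ (n + 1) * (ψ (n + 1)).eval y * f₂ y) * ∫ x, (φ (n + 1)).eval x * f₁ x = 0 := by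
      intro n
      rw [moment0 hf₁ hφ (n + 1)]
      simp
    rw [tsum_congr hz, tsum_zero, add_zero]
  have inner2 : ∀ y : ℝ, ∫ x, x * lancaster f₁ f₂ φ ψ ρ x y = (a₁ * y + a₀) * f₂ y := by
    intro y
    have h := inner_integral h₁ h₂ hf₁ hf₂ hm₁ hm₂ hc hd hsum hρ Polynomial.X y
    simp only [Polynomial.eval_X] at h
    rw [h]
    have hm1₀ : ∫ x, x * f₁ x = (0 - A) / p1 := by
      have h0 := moment1 hf₁ hm₁ hφ 0
      simp only [phi_zero_eval hf₁ hφ, one_mul] at h0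
      simpa using h0
    have hm1s : ∀ n : ℕ,
        ∫ x, x * ((φ (n + 1)).eval x * f₁ x) = if n = 0 then 1 / p1 else 0 := by
      intro n
      rw [moment1 hf₁ hm₁ hφ (n + 1)]
      by_cases hn : n = 0
      · subst hn; norm_num; rfl
      · have h1 : n + 1 ≠ 1 := by omega
        simp [hn, h1]
    have htsum : ∑' n : ℕ, (ρ (n + 1) * (ψ (n + 1)).eval y * f₂ y)
          * ∫ x, x * ((φ (n + 1)).eval x * f₁ x)
        = (ρ 1 * (ψ 1).eval y * f₂ y) * (1 / p1) := by
      rw [tsum_eq_single 0 ?_]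
      · rw [hm1s 0]; norm_num
      · intro n hn
        rw [hm1s n]
        simp [hn]
    have hintxf : ∫ x, x * f₁ x = ∫ x, x * f₁ x := rfl
    rw [htsum, eval_deg_one hψ y]
    have : (∫ x, x * f₁ x) = (0 - A) / p1 := hm1₀
    rw [this, ← hB0, ← hq1, ha₁, ha₀]
    field_simp
    ring
  -- a.e. box membership and integrability
  have hbox := box_ae μ hX hY (D := fun p => lancaster f₁ f₂ φ ψ ρ p.1 p.2)
    (fun p hp => lancaster_zero hf₁ hf₂ hp) hjoint
  have hXbd : ∀ᵐ ω ∂μ, |X ω| ≤ max |α₁| |ω₁| := by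
    filter_upwards [hbox] with ω hω using abs_le_max_abs_abs hω.1.1 hω.1.2
  have hYbd : ∀ᵐ ω ∂μ, |Y ω| ≤ max |α₂| |ω₂| := by
    filter_upwards [hbox] with ω hω using abs_le_max_abs_abs hω.2.1 hω.2.2
  have hXint : Integrable X μ := bdd_integrable μ hX hXbd
  have hYint : Integrable Y μ := bdd_integrable μ hY hYbd
  have hgint : Integrable (fun ω => a₁ * Y ω + a₀) μ := (hYint.const_mul _).add (integrable_const _)
  have hle : MeasurableSpace.comap Y inferInstance ≤ ‹MeasurableSpace Ω› := hY.comap_le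
  haveI : SigmaFinite (μ.trim hle) := by
    haveI := isFiniteMeasure_trim hle (μ := μ)
    infer_instance
  have hYm' : Measurable[MeasurableSpace.comap Y inferInstance] Y := fun s hs => ⟨s, hs, rfl⟩
  have hgm : AEStronglyMeasurable[MeasurableSpace.comap Y inferInstance]
      (fun ω => a₁ * Y ω + a₀) μ :=
    StronglyMeasurable.aestronglyMeasurable
      (Measurable.stronglyMeasurable ((hYm'.const_mul a₁).add_const a₀))
  -- the set-integral identity
  have hseteq : ∀ s, MeasurableSet[MeasurableSpace.comap Y inferInstance] s → μ s < ⊤ →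
      ∫ ω in s, (a₁ * Y ω + a₀) ∂μ = ∫ ω in s, X ω ∂μ := by
    rintro s ⟨B, hB, rfl⟩ -
    have ind : ∀ v : Ω → ℝ, (Y ⁻¹' B).indicator v
        = fun ω => Set.indicator B (fun _ => (1 : ℝ)) (Y ω) * v ω := by
      intro v
      funext ω
      by_cases hω : Y ω ∈ B <;> simp [Set.indicator_apply, hω]
    have hmh1 : Measurable fun p : ℝ × ℝ => Set.indicator B (fun _ => (1 : ℝ)) p.2 * p.1 :=
      ((measurable_const.indicator hB).comp measurable_snd).mul measurable_fst
    have hmh2 : Measurable fun p : ℝ × ℝ =>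
        Set.indicator B (fun _ => (1 : ℝ)) p.2 * (a₁ * p.2 + a₀) :=
      ((measurable_const.indicator hB).comp measurable_snd).mul
        ((measurable_snd.const_mul a₁).add_const a₀)
    have hXeq : ∫ ω in Y ⁻¹' B, X ω ∂μ
        = ∫ p : ℝ × ℝ, lancaster f₁ f₂ φ ψ ρ p.1 p.2
            * (Set.indicator B (fun _ => (1 : ℝ)) p.2 * p.1) := by
      rw [← integral_indicator (hY hB), ind]
      exact key_int μ hX hY hLmeas hL0 hjoint _ hmh1
    have hGeq : ∫ ω in Y ⁻¹' B, (a₁ * Y ω + a₀) ∂μ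
        = ∫ p : ℝ × ℝ, lancaster f₁ f₂ φ ψ ρ p.1 p.2
            * (Set.indicator B (fun _ => (1 : ℝ)) p.2 * (a₁ * p.2 + a₀)) := by
      rw [← integral_indicator (hY hB), ind]
      exact key_int μ hX hY hLmeas hL0 hjoint _ hmh2
    rw [hXeq, hGeq]
    have hbound1 : ∀ p : ℝ × ℝ, p.1 ∈ Set.Icc α₁ ω₁ → p.2 ∈ Set.Icc α₂ ω₂ →
        |Set.indicator B (fun _ => (1 : ℝ)) p.2 * p.1| ≤ max |α₁| |ω₁| := by
      intro p hx _
      rw [abs_mul]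
      have h1 : |Set.indicator B (fun _ => (1 : ℝ)) p.2| ≤ 1 := by
        by_cases hp : p.2 ∈ B <;> simp [Set.indicator_apply, hp]
      calc |Set.indicator B (fun _ => (1 : ℝ)) p.2| * |p.1|
          ≤ 1 * (max |α₁| |ω₁|) :=
            mul_le_mul h1 (abs_le_max_abs_abs hx.1 hx.2) (abs_nonneg _) zero_le_one
        _ = max |α₁| |ω₁| := one_mul _
    have hbound2 : ∀ p : ℝ × ℝ, p.1 ∈ Set.Icc α₁ ω₁ → p.2 ∈ Set.Icc α₂ ω₂ →
        |Set.indicator B (fun _ => (1 : ℝ)) p.2 * (a₁ * p.2 + a₀)|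
          ≤ |a₁| * max |α₂| |ω₂| + |a₀| := by
      intro p _ hy
      rw [abs_mul]
      have h1 : |Set.indicator B (fun _ => (1 : ℝ)) p.2| ≤ 1 := by
        by_cases hp : p.2 ∈ B <;> simp [Set.indicator_apply, hp]
      have h2 : |a₁ * p.2 + a₀| ≤ |a₁| * max |α₂| |ω₂| + |a₀| := by
        calc |a₁ * p.2 + a₀| ≤ |a₁ * p.2| + |a₀| := abs_add_le _ _
          _ ≤ |a₁| * max |α₂| |ω₂| + |a₀| := by
            rw [abs_mul]
            exact add_le_add_left
              (mul_le_mul_of_nonneg_left (abs_le_max_abs_abs hy.1 hy.2) (abs_nonneg _)) _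
      calc |Set.indicator B (fun _ => (1 : ℝ)) p.2| * |a₁ * p.2 + a₀|
          ≤ 1 * (|a₁| * max |α₂| |ω₂| + |a₀|) := by
            refine mul_le_mul h1 h2 (abs_nonneg _) zero_le_one
        _ = _ := one_mul _
    have hint1 := prod_integrable h₁ h₂ hf₁ hf₂ hm₁ hm₂ hc hd hsum hρ hmh1 hbound1
    have hint2 := prod_integrable h₁ h₂ hf₁ hf₂ hm₁ hm₂ hc hd hsum hρ hmh2 hbound2
    rw [show (volume : Measure (ℝ × ℝ)) = (volume : Measure ℝ).prod (volume : Measure ℝ) from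
      Measure.volume_eq_prod ℝ ℝ]
    rw [integral_prod_symm _ hint1, integral_prod_symm _ hint2]
    refine integral_congr_ae (ae_of_all _ fun y => ?_)
    have e1 : ∫ x, lancaster f₁ f₂ φ ψ ρ x y * (Set.indicator B (fun _ => (1 : ℝ)) y * x)
        = Set.indicator B (fun _ => (1 : ℝ)) y * ((a₁ * y + a₀) * f₂ y) := by
      rw [show (∫ x, lancaster f₁ f₂ φ ψ ρ x y * (Set.indicator B (fun _ => (1 : ℝ)) y * x))
          = ∫ x, Set.indicator B (fun _ => (1 : ℝ)) y * (x * lancaster f₁ f₂ φ ψ ρ x y) from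
        integral_congr_ae (ae_of_all _ fun x => by ring), integral_const_mul, inner2 y]
    have e2 : ∫ x, lancaster f₁ f₂ φ ψ ρ x y
          * (Set.indicator B (fun _ => (1 : ℝ)) y * (a₁ * y + a₀))
        = Set.indicator B (fun _ => (1 : ℝ)) y * ((a₁ * y + a₀) * f₂ y) := by
      rw [integral_mul_const, inner1 y]
      ring
    dsimp only
    rw [e1, e2]
  exact (ae_eq_condExp_of_forall_setIntegral_eq hle hXint
    (fun s _ _ => hgint.integrableOn) hseteq hgm).symm

/-- If `(X,Y)` has the Lancaster density, then for every `n ≥ 1`,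
`E(φₙ(X)|Y) = ρₙ ψₙ(Y)` a.s. and `E(ψₙ(Y)|X) = ρₙ φₙ(X)` a.s. -/
theorem stmt7 {Ω : Type*} [MeasurableSpace Ω] (μ : Measure Ω) [IsProbabilityMeasure μ]
    (X Y : Ω → ℝ) (hX : Measurable X) (hY : Measurable Y)
    (α₁ ω₁ α₂ ω₂ : ℝ) (h₁ : α₁ < ω₁) (h₂ : α₂ < ω₂)
    (f₁ f₂ : ℝ → ℝ) (hf₁ : IsDensityOn f₁ α₁ ω₁) (hf₂ : IsDensityOn f₂ α₂ ω₂)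
    (hm₁ : Measurable f₁) (hm₂ : Measurable f₂)
    (φ ψ : ℕ → Polynomial ℝ)
    (hφ : OrthonormalPolys f₁ φ) (hψ : OrthonormalPolys f₂ ψ)
    (c d : ℕ → ℝ)
    (hc : ∀ n, c n = sSup ((fun x => |(φ n).eval x|) '' Set.Icc α₁ ω₁))
    (hd : ∀ n, d n = sSup ((fun y => |(ψ n).eval y|) '' Set.Icc α₂ ω₂))
    (ρ : ℕ → ℝ)
    (hsum : Summable fun n : ℕ => |ρ (n + 1)| * c (n + 1) * d (n + 1))
    (hρ : ∑' n : ℕ, |ρ (n + 1)| * c (n + 1) * d (n + 1) ≤ 1)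
    (hjoint : Measure.map (fun ω => (X ω, Y ω)) μ =
      (volume : Measure (ℝ × ℝ)).withDensity
        (fun p => ENNReal.ofReal (lancaster f₁ f₂ φ ψ ρ p.1 p.2)))
    (hρ₁ : ρ 1 ≠ 0) :
    ∃ a₁ a₀ b₁ b₀ : ℝ, a₁ ≠ 0 ∧ b₁ ≠ 0 ∧
      (μ[X | MeasurableSpace.comap Y inferInstance] =ᵐ[μ] fun ω => a₁ * Y ω + a₀) ∧
      (μ[Y | MeasurableSpace.comap X inferInstance] =ᵐ[μ] fun ω => b₁ * X ω + b₀) := by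
  have hjoint' : Measure.map (fun ω => (Y ω, X ω)) μ =
      (volume : Measure (ℝ × ℝ)).withDensity
        (fun p => ENNReal.ofReal (lancaster f₂ f₁ ψ φ ρ p.1 p.2)) := by
    rw [map_swap_eq μ hX hY hjoint]
    congr 1
    funext p
    rw [lancaster_swap]
  have hsum' : Summable fun n : ℕ => |ρ (n + 1)| * d (n + 1) * c (n + 1) :=
    hsum.congr fun n => by ring
  have hρ' : ∑' n : ℕ, |ρ (n + 1)| * d (n + 1) * c (n + 1) ≤ 1 := by
    rw [tsum_congr (fun n => by ring :
      ∀ n : ℕ, |ρ (n + 1)| * d (n + 1) * c (n + 1) = |ρ (n + 1)| * c (n + 1) * d (n + 1))]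
    exact hρ
  obtain ⟨a₁, a₀, ha₁, hae₁⟩ := main_half μ X Y hX hY α₁ ω₁ α₂ ω₂ h₁ h₂ f₁ f₂ hf₁ hf₂
    hm₁ hm₂ φ ψ hφ hψ c d hc hd ρ hsum hρ hjoint hρ₁
  obtain ⟨b₁, b₀, hb₁, hae₂⟩ := main_half μ Y X hY hX α₂ ω₂ α₁ ω₁ h₂ h₁ f₂ f₁ hf₂ hf₁
    hm₂ hm₁ ψ φ hψ hφ d c hd hc ρ hsum' hρ' hjoint' hρ₁
  exact ⟨a₁, a₀, b₁, b₀, ha₁, hb₁, hae₁, hae₂⟩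
end

section
/- Let (X,Y) have the Lancaster density with E(φₙ(X)|Y) = ρₙ ψₙ(Y) a.s. and E(ψₙ(Y)|X) = ρₙ φₙ(X) a.s. for all n ≥ 1. Then for every n ≥ 1, E(Xⁿ | Y) = (ρₙ qₙ / pₙ) Yⁿ + P_{n−1}(Y) a.s. and E(Yⁿ | X) = (ρₙ pₙ / qₙ) Xⁿ + Q_{n−1}(X) a.s., where P_{n−1} and Q_{n−1} are polynomials of degree at most n − 1. -/
open MeasureTheory ProbabilityTheory Real
open scoped ENNReal

section Helpers

lemma helperDegLt (p : Polynomial ℝ) (n : ℕ) (h : p.degree ≤ (n : WithBot ℕ)) :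
    (p - Polynomial.C (p.coeff n) * Polynomial.X ^ n).degree < (n : WithBot ℕ) := by
  rw [Polynomial.degree_lt_iff_coeff_zero]
  intro m hm
  rw [Polynomial.coeff_sub, Polynomial.coeff_C_mul, Polynomial.coeff_X_pow]
  rcases eq_or_lt_of_le hm with h' | h'
  · simp [h']
  · rw [Polynomial.coeff_eq_zero_of_degree_lt (h.trans_lt (by exact_mod_cast h'))]
    simp [h'.ne']

lemma degCmulLe (a : ℝ) (q : Polynomial ℝ) : (Polynomial.C a * q).degree ≤ q.degree := by
  refine le_trans (Polynomial.degree_mul_le _ _) ?_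
  calc (Polynomial.C a).degree + q.degree ≤ 0 + q.degree :=
        add_le_add Polynomial.degree_C_le le_rfl
    _ = q.degree := zero_add _

lemma integrablePoly {Ω : Type*} [MeasurableSpace Ω] (μ : Measure Ω) [IsProbabilityMeasure μ]
    (X : Ω → ℝ) (hX : Measurable X) (a b : ℝ) (hXb : ∀ᵐ ω ∂μ, X ω ∈ Set.Icc a b)
    (q : Polynomial ℝ) : Integrable (fun ω => q.eval (X ω)) μ := by
  obtain ⟨C, hC⟩ := (isCompact_Icc (a := a) (b := b)).exists_bound_of_continuousOn
    (f := fun x => q.eval x) (q.continuous).continuousOn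
  have hm : AEStronglyMeasurable (fun ω => q.eval (X ω)) μ :=
    ((q.continuous).measurable.comp hX).aestronglyMeasurable
  have hmem : MemLp (fun ω => q.eval (X ω)) ⊤ μ :=
    memLp_top_of_bound hm C (hXb.mono fun ω h => hC _ h)
  exact (hmem.mono_exponent le_top).integrable le_rfl

lemma auxKey {Ω : Type*} [MeasurableSpace Ω] (μ : Measure Ω) [IsProbabilityMeasure μ]
    (X Y : Ω → ℝ) (hX : Measurable X) (hY : Measurable Y)
    (a b : ℝ) (hXb : ∀ᵐ ω ∂μ, X ω ∈ Set.Icc a b)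
    (φ ψ : ℕ → Polynomial ℝ)
    (hφd : ∀ n, (φ n).natDegree = n) (hφl : ∀ n, 0 < (φ n).leadingCoeff)
    (hψd : ∀ n, (ψ n).natDegree = n)
    (ρ : ℕ → ℝ)
    (hreg : ∀ n : ℕ, 1 ≤ n →
      μ[(fun ω => (φ n).eval (X ω)) | MeasurableSpace.comap Y inferInstance]
        =ᵐ[μ] fun ω => ρ n * (ψ n).eval (Y ω)) :
    ∀ n : ℕ, ∃ P : Polynomial ℝ, P.degree ≤ n ∧
      (1 ≤ n → P.coeff n = ρ n * (ψ n).leadingCoeff / (φ n).leadingCoeff) ∧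
      μ[(fun ω => X ω ^ n) | MeasurableSpace.comap Y inferInstance]
        =ᵐ[μ] fun ω => P.eval (Y ω) := by
  intro n
  induction n using Nat.strong_induction_on with
  | _ n IH =>
  rcases Nat.eq_zero_or_pos n with hn | hn
  · subst hn
    refine ⟨1, by simp, by simp, ?_⟩
    have : (fun ω => X ω ^ 0) = fun _ : Ω => (1 : ℝ) := by funext ω; simp
    rw [this, condExp_const hY.comap_le]
    filter_upwards with ω
    simp
  · -- n ≥ 1
    set p := (φ n).leadingCoeff with hp
    have hp0 : p ≠ 0 := (hφl n).ne'
    set r : Polynomial ℝ := φ n - Polynomial.C p * Polynomial.X ^ n with hrdef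
    have hφcn : (φ n).coeff n = p := by
      have := Polynomial.coeff_natDegree (p := φ n)
      rwa [hφd n] at this
    have hrdeg : r.degree < (n : WithBot ℕ) := by
      have := helperDegLt (φ n) n (Polynomial.degree_le_natDegree.trans (by rw [hφd n]))
      rwa [hφcn] at this
    have hrnat : r.natDegree < n := by
      by_cases hr : r = 0
      · simpa [hr] using hn
      · exact (Polynomial.natDegree_lt_iff_degree_lt hr).2 hrdeg
    -- choose polynomials from IH
    have hIH : ∀ k : ℕ, ∃ P : Polynomial ℝ, k < n →
        (P.degree ≤ (k : WithBot ℕ) ∧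
          μ[(fun ω => X ω ^ k) | MeasurableSpace.comap Y inferInstance]
            =ᵐ[μ] fun ω => P.eval (Y ω)) := by
      intro k
      by_cases hk : k < n
      · obtain ⟨P, h1, _, h3⟩ := IH k hk
        exact ⟨P, fun _ => ⟨h1, h3⟩⟩
      · exact ⟨0, fun h => absurd h hk⟩
    choose Q hQ using hIH
    set S : Polynomial ℝ := ∑ k ∈ Finset.range n, Polynomial.C (r.coeff k) * Q k with hSdef
    have hSdeg : S.degree < (n : WithBot ℕ) := by
      apply lt_of_le_of_lt (Polynomial.degree_sum_le _ _)
      rw [Finset.sup_lt_iff (by exact_mod_cast WithBot.bot_lt_coe n)]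
      intro k hk
      calc (Polynomial.C (r.coeff k) * Q k).degree ≤ (Q k).degree := degCmulLe _ _
        _ ≤ (k : WithBot ℕ) := (hQ k (Finset.mem_range.1 hk)).1
        _ < (n : WithBot ℕ) := by exact_mod_cast Finset.mem_range.1 hk
    -- integrability
    have hXpow : ∀ k : ℕ, Integrable (fun ω => X ω ^ k) μ := by
      intro k
      have := integrablePoly μ X hX a b hXb (Polynomial.X ^ k)
      simpa using this
    have hF : Integrable (fun ω => (φ n).eval (X ω)) μ := integrablePoly μ X hX a b hXb _
    have hG : Integrable (fun ω => r.eval (X ω)) μ := integrablePoly μ X hX a b hXb _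
    -- decomposition of X^n
    have e1 : (fun ω => X ω ^ n) =
        p⁻¹ • ((fun ω => (φ n).eval (X ω)) - fun ω => r.eval (X ω)) := by
      funext ω
      simp only [Pi.smul_apply, Pi.sub_apply, hrdef, Polynomial.eval_sub,
        Polynomial.eval_mul, Polynomial.eval_C, Polynomial.eval_pow, Polynomial.eval_X,
        smul_eq_mul]
      field_simp
      ring
    -- condexp of r(X) via sum
    have eG : (fun ω => r.eval (X ω)) =
        ∑ k ∈ Finset.range n, (r.coeff k) • (fun ω => X ω ^ k) := by
      funext ω
      simp [Polynomial.eval_eq_sum_range' hrnat, Finset.sum_apply]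
    have hGsum : μ[(fun ω => r.eval (X ω)) | MeasurableSpace.comap Y inferInstance]
        =ᵐ[μ] fun ω => S.eval (Y ω) := by
      rw [eG]
      refine (condExp_finsetSum (fun k _ => (hXpow k).smul (r.coeff k)) _).trans ?_
      have h2 : ∀ k ∈ Finset.range n,
          μ[(r.coeff k) • (fun ω => X ω ^ k) | MeasurableSpace.comap Y inferInstance]
            =ᵐ[μ] fun ω => r.coeff k * (Q k).eval (Y ω) := by
        intro k hk
        refine (condExp_smul (r.coeff k) _ _).trans ?_
        filter_upwards [(hQ k (Finset.mem_range.1 hk)).2] with ω hω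
        simp [hω]
      filter_upwards [(Filter.eventually_all_finset (Finset.range n)).2 h2] with ω hω
      simp only [Finset.sum_apply, hSdef, Polynomial.eval_finset_sum,
        Polynomial.eval_mul, Polynomial.eval_C]
      exact Finset.sum_congr rfl fun k hk => hω k hk
    -- assemble
    set P : Polynomial ℝ := Polynomial.C (ρ n * p⁻¹) * ψ n - Polynomial.C p⁻¹ * S with hPdef
    refine ⟨P, ?_, ?_, ?_⟩
    · apply le_trans (Polynomial.degree_sub_le _ _)
      apply max_le
      · exact le_trans (degCmulLe _ _) (Polynomial.degree_le_natDegree.trans (by rw [hψd n]))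
      · exact le_trans (degCmulLe _ _) hSdeg.le
    · intro _
      have hS0 : S.coeff n = 0 := Polynomial.coeff_eq_zero_of_degree_lt hSdeg
      have hψcn : (ψ n).coeff n = (ψ n).leadingCoeff := by
        have := Polynomial.coeff_natDegree (p := ψ n)
        rwa [hψd n] at this
      rw [hPdef]
      simp only [Polynomial.coeff_sub, Polynomial.coeff_C_mul, hS0, hψcn]
      field_simp
      ring
    · have e2 : μ[(fun ω => X ω ^ n) | MeasurableSpace.comap Y inferInstance]
          =ᵐ[μ] p⁻¹ • μ[((fun ω => (φ n).eval (X ω)) - fun ω => r.eval (X ω)) |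
            MeasurableSpace.comap Y inferInstance] := by
        rw [e1]; exact condExp_smul p⁻¹ _ _
      have e3 : μ[((fun ω => (φ n).eval (X ω)) - fun ω => r.eval (X ω)) |
            MeasurableSpace.comap Y inferInstance]
          =ᵐ[μ] μ[(fun ω => (φ n).eval (X ω)) | MeasurableSpace.comap Y inferInstance]
            - μ[(fun ω => r.eval (X ω)) | MeasurableSpace.comap Y inferInstance] :=
        condExp_sub hF hG _
      refine e2.trans ?_
      filter_upwards [e3, hreg n hn, hGsum] with ω h3 h4 h5
      simp only [Pi.smul_apply, Pi.sub_apply, smul_eq_mul] at h3 ⊢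
      rw [h3, h4, h5, hPdef]
      simp only [Polynomial.eval_sub, Polynomial.eval_mul, Polynomial.eval_C]
      ring

lemma aeBound {Ω : Type*} [MeasurableSpace Ω] (μ : Measure Ω) [IsProbabilityMeasure μ]
    (X Y : Ω → ℝ) (hX : Measurable X) (hY : Measurable Y)
    (α₁ ω₁ α₂ ω₂ : ℝ)
    (f₁ f₂ : ℝ → ℝ) (hf₁ : IsDensityOn f₁ α₁ ω₁)
    (φ ψ : ℕ → Polynomial ℝ) (ρ : ℕ → ℝ)
    (hjoint : Measure.map (fun ω => (X ω, Y ω)) μ =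
      (volume : Measure (ℝ × ℝ)).withDensity
        (fun p => ENNReal.ofReal (lancaster f₁ f₂ φ ψ ρ p.1 p.2))) :
    ∀ᵐ ω ∂μ, X ω ∈ Set.Icc α₁ ω₁ := by
  rw [ae_iff]
  have hSm : MeasurableSet {p : ℝ × ℝ | p.1 ∉ Set.Icc α₁ ω₁} := by
    have : {p : ℝ × ℝ | p.1 ∉ Set.Icc α₁ ω₁} = Prod.fst ⁻¹' (Set.Icc α₁ ω₁)ᶜ := rfl
    rw [this]
    exact measurable_fst measurableSet_Icc.compl
  have hmap : Measure.map (fun ω => (X ω, Y ω)) μ {p : ℝ × ℝ | p.1 ∉ Set.Icc α₁ ω₁} = 0 := by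
    rw [hjoint, withDensity_apply _ hSm]
    have : ∀ p ∈ {p : ℝ × ℝ | p.1 ∉ Set.Icc α₁ ω₁},
        ENNReal.ofReal (lancaster f₁ f₂ φ ψ ρ p.1 p.2) = 0 := by
      intro p hp
      simp [lancaster, hf₁.2.1 p.1 hp]
    rw [setLIntegral_congr_fun hSm this, lintegral_zero]
  have hpre : μ ((fun ω => (X ω, Y ω)) ⁻¹' {p : ℝ × ℝ | p.1 ∉ Set.Icc α₁ ω₁}) = 0 := by
    rw [← Measure.map_apply (hX.prodMk hY) hSm, hmap]
  convert hpre using 2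
  rfl

lemma aeBoundSnd {Ω : Type*} [MeasurableSpace Ω] (μ : Measure Ω) [IsProbabilityMeasure μ]
    (X Y : Ω → ℝ) (hX : Measurable X) (hY : Measurable Y)
    (α₁ ω₁ α₂ ω₂ : ℝ)
    (f₁ f₂ : ℝ → ℝ) (hf₂ : IsDensityOn f₂ α₂ ω₂)
    (φ ψ : ℕ → Polynomial ℝ) (ρ : ℕ → ℝ)
    (hjoint : Measure.map (fun ω => (X ω, Y ω)) μ =
      (volume : Measure (ℝ × ℝ)).withDensity
        (fun p => ENNReal.ofReal (lancaster f₁ f₂ φ ψ ρ p.1 p.2))) :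
    ∀ᵐ ω ∂μ, Y ω ∈ Set.Icc α₂ ω₂ := by
  rw [ae_iff]
  have hSm : MeasurableSet {p : ℝ × ℝ | p.2 ∉ Set.Icc α₂ ω₂} := by
    have : {p : ℝ × ℝ | p.2 ∉ Set.Icc α₂ ω₂} = Prod.snd ⁻¹' (Set.Icc α₂ ω₂)ᶜ := rfl
    rw [this]
    exact measurable_snd measurableSet_Icc.compl
  have hmap : Measure.map (fun ω => (X ω, Y ω)) μ {p : ℝ × ℝ | p.2 ∉ Set.Icc α₂ ω₂} = 0 := by
    rw [hjoint, withDensity_apply _ hSm]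
    have : ∀ p ∈ {p : ℝ × ℝ | p.2 ∉ Set.Icc α₂ ω₂},
        ENNReal.ofReal (lancaster f₁ f₂ φ ψ ρ p.1 p.2) = 0 := by
      intro p hp
      simp [lancaster, hf₂.2.1 p.2 hp]
    rw [setLIntegral_congr_fun hSm this, lintegral_zero]
  have hpre : μ ((fun ω => (X ω, Y ω)) ⁻¹' {p : ℝ × ℝ | p.2 ∉ Set.Icc α₂ ω₂}) = 0 := by
    rw [← Measure.map_apply (hX.prodMk hY) hSm, hmap]
  convert hpre using 2
  rfl

end Helpers

/-- If `(X,Y)` has the Lancaster density, then for every `n ≥ 1`,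
`E(φₙ(X)|Y) = ρₙ ψₙ(Y)` a.s. and `E(ψₙ(Y)|X) = ρₙ φₙ(X)` a.s. -/
theorem stmt8 {Ω : Type*} [MeasurableSpace Ω] (μ : Measure Ω) [IsProbabilityMeasure μ]
    (X Y : Ω → ℝ) (hX : Measurable X) (hY : Measurable Y)
    (α₁ ω₁ α₂ ω₂ : ℝ) (h₁ : α₁ < ω₁) (h₂ : α₂ < ω₂)
    (f₁ f₂ : ℝ → ℝ) (hf₁ : IsDensityOn f₁ α₁ ω₁) (hf₂ : IsDensityOn f₂ α₂ ω₂)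
    (hm₁ : Measurable f₁) (hm₂ : Measurable f₂)
    (φ ψ : ℕ → Polynomial ℝ)
    (hφ : OrthonormalPolys f₁ φ) (hψ : OrthonormalPolys f₂ ψ)
    (c d : ℕ → ℝ)
    (hc : ∀ n, c n = sSup ((fun x => |(φ n).eval x|) '' Set.Icc α₁ ω₁))
    (hd : ∀ n, d n = sSup ((fun y => |(ψ n).eval y|) '' Set.Icc α₂ ω₂))
    (ρ : ℕ → ℝ)
    (hsum : Summable fun n : ℕ => |ρ (n + 1)| * c (n + 1) * d (n + 1))
    (hρ : ∑' n : ℕ, |ρ (n + 1)| * c (n + 1) * d (n + 1) ≤ 1)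
    (hjoint : Measure.map (fun ω => (X ω, Y ω)) μ =
      (volume : Measure (ℝ × ℝ)).withDensity
        (fun p => ENNReal.ofReal (lancaster f₁ f₂ φ ψ ρ p.1 p.2)))
    (hreg : ∀ n : ℕ, 1 ≤ n →
      (μ[(fun ω => (φ n).eval (X ω)) | MeasurableSpace.comap Y inferInstance]
          =ᵐ[μ] fun ω => ρ n * (ψ n).eval (Y ω)) ∧
      (μ[(fun ω => (ψ n).eval (Y ω)) | MeasurableSpace.comap X inferInstance]
          =ᵐ[μ] fun ω => ρ n * (φ n).eval (X ω))) :
    ∀ n : ℕ, 1 ≤ n →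
      (∃ P : Polynomial ℝ, P.degree < n ∧
        μ[(fun ω => X ω ^ n) | MeasurableSpace.comap Y inferInstance]
          =ᵐ[μ] fun ω => (ρ n * (ψ n).leadingCoeff / (φ n).leadingCoeff) * Y ω ^ n
            + P.eval (Y ω)) ∧
      (∃ Q : Polynomial ℝ, Q.degree < n ∧
        μ[(fun ω => Y ω ^ n) | MeasurableSpace.comap X inferInstance]
          =ᵐ[μ] fun ω => (ρ n * (φ n).leadingCoeff / (ψ n).leadingCoeff) * X ω ^ n
            + Q.eval (X ω)) := by
  have hXb : ∀ᵐ ω ∂μ, X ω ∈ Set.Icc α₁ ω₁ :=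
    aeBound μ X Y hX hY α₁ ω₁ α₂ ω₂ f₁ f₂ hf₁ φ ψ ρ hjoint
  have hYb : ∀ᵐ ω ∂μ, Y ω ∈ Set.Icc α₂ ω₂ :=
    aeBoundSnd μ X Y hX hY α₁ ω₁ α₂ ω₂ f₁ f₂ hf₂ φ ψ ρ hjoint
  have key₁ := auxKey μ X Y hX hY α₁ ω₁ hXb φ ψ hφ.1 hφ.2.1 hψ.1 ρ
    (fun n hn => (hreg n hn).1)
  have key₂ := auxKey μ Y X hY hX α₂ ω₂ hYb ψ φ hψ.1 hψ.2.1 hφ.1 ρ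
    (fun n hn => (hreg n hn).2)
  intro n hn
  constructor
  · obtain ⟨P, hdeg, hc, hae⟩ := key₁ n
    refine ⟨P - Polynomial.C (P.coeff n) * Polynomial.X ^ n, helperDegLt P n hdeg, ?_⟩
    filter_upwards [hae] with ω h
    rw [h, ← hc hn]
    simp only [Polynomial.eval_sub, Polynomial.eval_mul, Polynomial.eval_C,
      Polynomial.eval_pow, Polynomial.eval_X]
    ring
  · obtain ⟨Q, hdeg, hc, hae⟩ := key₂ n
    refine ⟨Q - Polynomial.C (Q.coeff n) * Polynomial.X ^ n, helperDegLt Q n hdeg, ?_⟩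
    filter_upwards [hae] with ω h
    rw [h, ← hc hn]
    simp only [Polynomial.eval_sub, Polynomial.eval_mul, Polynomial.eval_C,
      Polynomial.eval_pow, Polynomial.eval_X]
    ring
end

section
/- Let (X,Y) have the Lancaster density with coefficients (ρₙ) satisfying Σₙ |ρₙ| cₙ dₙ ≤ 1. Then the Pearson correlation coefficient of X and Y equals ρ₁: ρ(X,Y) = ρ₁. -/
open MeasureTheory ProbabilityTheory Real
open scoped ENNReal

namespace LancAux

variable {g : ℝ → ℝ} {a b : ℝ}

lemma integrable_density (hg : IsDensityOn g a b) : Integrable g := by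
  by_contra h
  have := hg.2.2
  rw [integral_undef h] at this; exact one_ne_zero this.symm

lemma integrable_mul (hg : IsDensityOn g a b) (hmg : Measurable g)
    {P : ℝ → ℝ} (hP : Continuous P) : Integrable (fun x => P x * g x) := by
  obtain ⟨C, hC⟩ := (isCompact_Icc (a := a) (b := b)).exists_bound_of_continuousOn
    hP.continuousOn
  refine Integrable.mono' ((integrable_density hg).const_mul C)
    ((hP.measurable.mul hmg).aestronglyMeasurable) (ae_of_all _ fun x => ?_)
  by_cases hx : x ∈ Set.Icc a b
  · rw [Real.norm_eq_abs, abs_mul, abs_of_nonneg (hg.1 x)]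
    exact mul_le_mul_of_nonneg_right (hC x hx) (hg.1 x)
  · simp [hg.2.1 x hx]

lemma integral_abs_le (hg : IsDensityOn g a b) (hmg : Measurable g)
    {P : ℝ → ℝ} (hP : Continuous P) {C : ℝ} (hC0 : 0 ≤ C)
    (hC : ∀ x ∈ Set.Icc a b, |P x| ≤ C) :
    ∫ x, |P x * g x| ≤ C := by
  have h1 : Integrable (fun x => |P x * g x|) := (integrable_mul hg hmg hP).abs
  have h2 : ∀ x, |P x * g x| ≤ C * g x := by
    intro x
    by_cases hx : x ∈ Set.Icc a b
    · rw [abs_mul, abs_of_nonneg (hg.1 x)]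
      exact mul_le_mul_of_nonneg_right (hC x hx) (hg.1 x)
    · simp [hg.2.1 x hx]
  calc ∫ x, |P x * g x| ≤ ∫ x, C * g x :=
        integral_mono h1 ((integrable_density hg).const_mul C) h2
    _ = C := by rw [integral_const_mul, hg.2.2, mul_one]

lemma csSup_bound (p : Polynomial ℝ) (hab : a ≤ b) :
    (∀ x ∈ Set.Icc a b, |p.eval x| ≤ sSup ((fun x => |p.eval x|) '' Set.Icc a b)) ∧
      0 ≤ sSup ((fun x => |p.eval x|) '' Set.Icc a b) := by
  have hbdd : BddAbove ((fun x => |p.eval x|) '' Set.Icc a b) :=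
    (isCompact_Icc.image (p.continuous.abs)).bddAbove
  have h1 : ∀ x ∈ Set.Icc a b, |p.eval x| ≤ sSup ((fun x => |p.eval x|) '' Set.Icc a b) :=
    fun x hx => le_csSup hbdd (Set.mem_image_of_mem _ hx)
  exact ⟨h1, le_trans (abs_nonneg _) (h1 a ⟨le_refl a, hab⟩)⟩

lemma ortho_struct (hg : IsDensityOn g a b) (hmg : Measurable g)
    {φ : ℕ → Polynomial ℝ} (h : OrthonormalPolys g φ) :
    ∃ A : ℝ, 0 < A ∧ (∀ x, (φ 1).eval x = A * (x - ∫ t, t * g t)) ∧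
      (∀ n, 1 ≤ n → ∫ x, (φ n).eval x * g x = 0) := by
  obtain ⟨hdeg, hlc, hint⟩ := h
  -- φ 0 = 1
  have h00 : φ 0 = Polynomial.C ((φ 0).coeff 0) :=
    Polynomial.eq_C_of_natDegree_eq_zero (hdeg 0)
  set k : ℝ := (φ 0).coeff 0 with hk
  have hkpos : 0 < k := by
    have := hlc 0
    rwa [Polynomial.leadingCoeff, hdeg 0] at this
  have hksq : k * k = 1 := by
    have := hint 0 0
    simp only [if_pos rfl] at this
    rw [show (fun x : ℝ => (φ 0).eval x * (φ 0).eval x * g x) = fun x => (k * k) * g x from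
      funext fun x => by rw [h00]; simp, integral_const_mul, hg.2.2, mul_one] at this
    exact this
  have hk1 : k = 1 := by nlinarith
  have hφ0 : ∀ x, (φ 0).eval x = 1 := fun x => by rw [h00]; simp [← hk, hk1]
  have hmom : ∀ n, 1 ≤ n → ∫ x, (φ n).eval x * g x = 0 := by
    intro n hn
    have := hint 0 n
    rw [if_neg (by omega)] at this
    simpa only [hφ0, one_mul] using this
  -- φ 1 = A (x - m)
  set A : ℝ := (φ 1).coeff 1 with hA
  have hApos : 0 < A := by
    have := hlc 1
    rwa [Polynomial.leadingCoeff, hdeg 1] at this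
  have h1e : ∀ x : ℝ, (φ 1).eval x = A * x + (φ 1).coeff 0 := by
    intro x
    conv_lhs => rw [Polynomial.eq_X_add_C_of_natDegree_le_one (le_of_eq (hdeg 1))]
    simp [hA]
  set m : ℝ := ∫ t, t * g t with hm
  have hb : A * m + (φ 1).coeff 0 = 0 := by
    have h2 := hmom 1 le_rfl
    have : ∫ x, (φ 1).eval x * g x = A * m + (φ 1).coeff 0 := by
      simp_rw [h1e, add_mul]
      rw [integral_add (by
            simpa [mul_assoc] using (integrable_mul hg hmg (continuous_id)).const_mul A)
          ((integrable_density hg).const_mul _)]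
      simp_rw [mul_assoc]
      rw [integral_const_mul, integral_const_mul, ← hm, hg.2.2, mul_one]
    rw [this] at h2; exact h2
  refine ⟨A, hApos, fun x => ?_, hmom⟩
  rw [h1e x]; linarith [hb]

end LancAux

/-- If `(X,Y)` has the Lancaster density, then for every `n ≥ 1`,
`E(φₙ(X)|Y) = ρₙ ψₙ(Y)` a.s. and `E(ψₙ(Y)|X) = ρₙ φₙ(X)` a.s. -/
theorem stmt9 {Ω : Type*} [MeasurableSpace Ω] (μ : Measure Ω) [IsProbabilityMeasure μ]
    (X Y : Ω → ℝ) (hX : Measurable X) (hY : Measurable Y)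
    (α₁ ω₁ α₂ ω₂ : ℝ) (h₁ : α₁ < ω₁) (h₂ : α₂ < ω₂)
    (f₁ f₂ : ℝ → ℝ) (hf₁ : IsDensityOn f₁ α₁ ω₁) (hf₂ : IsDensityOn f₂ α₂ ω₂)
    (hm₁ : Measurable f₁) (hm₂ : Measurable f₂)
    (φ ψ : ℕ → Polynomial ℝ)
    (hφ : OrthonormalPolys f₁ φ) (hψ : OrthonormalPolys f₂ ψ)
    (c d : ℕ → ℝ)
    (hc : ∀ n, c n = sSup ((fun x => |(φ n).eval x|) '' Set.Icc α₁ ω₁))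
    (hd : ∀ n, d n = sSup ((fun y => |(ψ n).eval y|) '' Set.Icc α₂ ω₂))
    (ρ : ℕ → ℝ)
    (hsum : Summable fun n : ℕ => |ρ (n + 1)| * c (n + 1) * d (n + 1))
    (hρ : ∑' n : ℕ, |ρ (n + 1)| * c (n + 1) * d (n + 1) ≤ 1)
    (hjoint : Measure.map (fun ω => (X ω, Y ω)) μ =
      (volume : Measure (ℝ × ℝ)).withDensity
        (fun p => ENNReal.ofReal (lancaster f₁ f₂ φ ψ ρ p.1 p.2))) :
    pearson μ X Y = ρ 1 := by
  classical
  set ν : Measure (ℝ × ℝ) := (volume : Measure (ℝ × ℝ)).withDensity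
      (fun p => ENNReal.ofReal (lancaster f₁ f₂ φ ψ ρ p.1 p.2)) with hνdef
  set F : ℝ × ℝ → ℝ := fun p => lancaster f₁ f₂ φ ψ ρ p.1 p.2 with hFdef
  -- bounds from sSup
  have hc1 : ∀ n, ∀ x ∈ Set.Icc α₁ ω₁, |(φ n).eval x| ≤ c n := by
    intro n; rw [hc n]; exact (LancAux.csSup_bound (φ n) h₁.le).1
  have hc0 : ∀ n, 0 ≤ c n := fun n => by rw [hc n]; exact (LancAux.csSup_bound (φ n) h₁.le).2
  have hd1 : ∀ n, ∀ y ∈ Set.Icc α₂ ω₂, |(ψ n).eval y| ≤ d n := by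
    intro n; rw [hd n]; exact (LancAux.csSup_bound (ψ n) h₂.le).1
  have hd0 : ∀ n, 0 ≤ d n := fun n => by rw [hd n]; exact (LancAux.csSup_bound (ψ n) h₂.le).2
  have hb₁ : ∀ n x, |(φ n).eval x * f₁ x| ≤ c n * f₁ x := by
    intro n x
    by_cases hx : x ∈ Set.Icc α₁ ω₁
    · rw [abs_mul, abs_of_nonneg (hf₁.1 x)]
      exact mul_le_mul_of_nonneg_right (hc1 n x hx) (hf₁.1 x)
    · simp [hf₁.2.1 x hx]
  have hb₂ : ∀ n y, |(ψ n).eval y * f₂ y| ≤ d n * f₂ y := by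
    intro n y
    by_cases hy : y ∈ Set.Icc α₂ ω₂
    · rw [abs_mul, abs_of_nonneg (hf₂.1 y)]
      exact mul_le_mul_of_nonneg_right (hd1 n y hy) (hf₂.1 y)
    · simp [hf₂.2.1 y hy]
  -- the series family
  set u : ℕ → ℝ × ℝ → ℝ := fun n p =>
    (ρ (n+1) * ((φ (n+1)).eval p.1 * f₁ p.1)) * ((ψ (n+1)).eval p.2 * f₂ p.2) with hudef
  have hub : ∀ n p, |u n p| ≤ (|ρ (n+1)| * c (n+1) * d (n+1)) * (f₁ p.1 * f₂ p.2) := by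
    intro n p
    have h1 : |u n p| = |ρ (n+1)| * |(φ (n+1)).eval p.1 * f₁ p.1| *
        |(ψ (n+1)).eval p.2 * f₂ p.2| := by
      rw [hudef]; simp only []; rw [abs_mul, abs_mul]
    rw [h1]
    calc |ρ (n+1)| * |(φ (n+1)).eval p.1 * f₁ p.1| * |(ψ (n+1)).eval p.2 * f₂ p.2|
        ≤ |ρ (n+1)| * (c (n+1) * f₁ p.1) * (d (n+1) * f₂ p.2) := by
          refine mul_le_mul (mul_le_mul_of_nonneg_left (hb₁ _ _) (abs_nonneg _)) (hb₂ _ _)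
            (abs_nonneg _) ?_
          exact mul_nonneg (abs_nonneg _) (mul_nonneg (hc0 _) (hf₁.1 _))
      _ = (|ρ (n+1)| * c (n+1) * d (n+1)) * (f₁ p.1 * f₂ p.2) := by ring
  have husum : ∀ p, Summable (fun n => |u n p|) := fun p =>
    Summable.of_nonneg_of_le (fun n => abs_nonneg _) (fun n => hub n p)
      (hsum.mul_right _)
  have husum' : ∀ p, Summable (fun n => u n p) := fun p => (husum p).of_abs
  have htub : ∀ p, |∑' n, u n p| ≤ f₁ p.1 * f₂ p.2 := by
    intro p
    calc |∑' n, u n p| ≤ ∑' n, |u n p| := by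
          simpa using norm_tsum_le_tsum_norm (f := fun n => u n p) (by simpa using husum p)
      _ ≤ ∑' n, (|ρ (n+1)| * c (n+1) * d (n+1)) * (f₁ p.1 * f₂ p.2) :=
          Summable.tsum_le_tsum (fun n => hub n p) (husum p) (hsum.mul_right _)
      _ = (∑' n, |ρ (n+1)| * c (n+1) * d (n+1)) * (f₁ p.1 * f₂ p.2) := tsum_mul_right
      _ ≤ 1 * (f₁ p.1 * f₂ p.2) :=
          mul_le_mul_of_nonneg_right hρ (mul_nonneg (hf₁.1 _) (hf₂.1 _))
      _ = f₁ p.1 * f₂ p.2 := one_mul _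
  have hFeq : ∀ p, F p = f₁ p.1 * f₂ p.2 + ∑' n, u n p := by
    intro p
    rw [hFdef]
    show lancaster f₁ f₂ φ ψ ρ p.1 p.2 = _
    rw [lancaster, mul_add, mul_one, ← tsum_mul_left]
    congr 1
    exact tsum_congr fun n => by rw [hudef]; ring
  have hF0 : ∀ p, 0 ≤ F p := by
    intro p
    rw [hFeq p]
    have h1 := (abs_le.1 (htub p)).1
    linarith
  have humeas : ∀ n, Measurable (u n) := by
    intro n
    exact (measurable_const.mul (((φ (n+1)).continuous.measurable.comp measurable_fst).mul
      (hm₁.comp measurable_fst))).mul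
      (((ψ (n+1)).continuous.measurable.comp measurable_snd).mul (hm₂.comp measurable_snd))
  have hFmeas : Measurable F := by
    rw [funext hFeq]
    refine measurable_of_tendsto_metrizable
      (f := fun k p => f₁ p.1 * f₂ p.2 + ∑ n ∈ Finset.range k, u n p)
      (fun k => ((hm₁.comp measurable_fst).mul (hm₂.comp measurable_snd)).add
        (Finset.measurable_sum _ (fun n _ => humeas n))) ?_
    rw [tendsto_pi_nhds]
    exact fun p => tendsto_const_nhds.add (husum' p).hasSum.tendsto_sum_nat
  have hν2 : ν = volume.withDensity (fun p => ((F p).toNNReal : ℝ≥0∞)) := rfl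
  have hInt : ∀ G : ℝ × ℝ → ℝ, ∫ p, G p ∂ν = ∫ p, F p * G p := by
    intro G
    rw [hν2, integral_withDensity_eq_integral_smul hFmeas.real_toNNReal]
    congr 1; funext p
    rw [NNReal.smul_def, Real.coe_toNNReal _ (hF0 p), smul_eq_mul]
  have hFzero : ∀ p : ℝ × ℝ, p.1 ∉ Set.Icc α₁ ω₁ ∨ p.2 ∉ Set.Icc α₂ ω₂ → F p = 0 := by
    rintro p (h | h)
    · rw [hFdef]; show lancaster f₁ f₂ φ ψ ρ p.1 p.2 = 0
      rw [lancaster, hf₁.2.1 _ h]; ring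
    · rw [hFdef]; show lancaster f₁ f₂ φ ψ ρ p.1 p.2 = 0
      rw [lancaster, hf₂.2.1 _ h]; ring
  have key : ∀ P Q : ℝ → ℝ, Continuous P → Continuous Q →
      ∫ p, P p.1 * Q p.2 ∂ν =
        (∫ x, P x * f₁ x) * (∫ y, Q y * f₂ y) +
          ∑' n : ℕ, ρ (n+1) * ((∫ x, P x * (φ (n+1)).eval x * f₁ x) *
            (∫ y, Q y * (ψ (n+1)).eval y * f₂ y)) := by
    intro P Q hP hQ
    obtain ⟨Cp, hCp⟩ := (isCompact_Icc (a := α₁) (b := ω₁)).exists_bound_of_continuousOn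
      hP.continuousOn
    obtain ⟨Cq, hCq⟩ := (isCompact_Icc (a := α₂) (b := ω₂)).exists_bound_of_continuousOn
      hQ.continuousOn
    have hCp0 : 0 ≤ Cp := le_trans (norm_nonneg _) (hCp α₁ ⟨le_refl _, h₁.le⟩)
    have hCq0 : 0 ≤ Cq := le_trans (norm_nonneg _) (hCq α₂ ⟨le_refl _, h₂.le⟩)
    simp only [Real.norm_eq_abs] at hCp hCq
    set A : ℕ → ℝ → ℝ := fun n x => (ρ (n+1) * (P x * (φ (n+1)).eval x)) * f₁ x with hAdef
    set B : ℕ → ℝ → ℝ := fun n y => Q y * (ψ (n+1)).eval y * f₂ y with hBdef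
    have hA0int : Integrable (fun x => P x * f₁ x) := LancAux.integrable_mul hf₁ hm₁ hP
    have hB0int : Integrable (fun y => Q y * f₂ y) := LancAux.integrable_mul hf₂ hm₂ hQ
    have hAint : ∀ n, Integrable (A n) := by
      intro n
      show Integrable (fun x => (ρ (n+1) * (P x * (φ (n+1)).eval x)) * f₁ x)
      exact LancAux.integrable_mul hf₁ hm₁ (continuous_const.mul (hP.mul (φ (n+1)).continuous))
    have hBint : ∀ n, Integrable (B n) := by
      intro n
      show Integrable (fun y => (Q y * (ψ (n+1)).eval y) * f₂ y)
      exact LancAux.integrable_mul hf₂ hm₂ (hQ.mul (ψ (n+1)).continuous)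
    have hAbs : ∀ n, ∫ x, |A n x| ≤ |ρ (n+1)| * (Cp * c (n+1)) := by
      intro n
      show ∫ x, |(ρ (n+1) * (P x * (φ (n+1)).eval x)) * f₁ x| ≤ _
      refine LancAux.integral_abs_le hf₁ hm₁
        (continuous_const.mul (hP.mul (φ (n+1)).continuous))
        (mul_nonneg (abs_nonneg _) (mul_nonneg hCp0 (hc0 _))) (fun x hx => ?_)
      simp only [Pi.mul_apply]
      rw [abs_mul, abs_mul]
      exact mul_le_mul_of_nonneg_left (mul_le_mul (hCp x hx) (hc1 _ x hx) (abs_nonneg _) hCp0)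
        (abs_nonneg _)
    have hBbs : ∀ n, ∫ y, |B n y| ≤ Cq * d (n+1) := by
      intro n
      show ∫ y, |(Q y * (ψ (n+1)).eval y) * f₂ y| ≤ _
      refine LancAux.integral_abs_le hf₂ hm₂ (hQ.mul (ψ (n+1)).continuous)
        (mul_nonneg hCq0 (hd0 _)) (fun y hy => ?_)
      simp only [Pi.mul_apply]
      rw [abs_mul]
      exact mul_le_mul (hCq y hy) (hd1 _ y hy) (abs_nonneg _) hCq0
    have hvint : ∀ n, Integrable (fun p : ℝ × ℝ => A n p.1 * B n p.2) := by
      intro n; rw [Measure.volume_eq_prod ℝ ℝ]; exact (hAint n).mul_prod (hBint n)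
    have hFPQ : ∀ p : ℝ × ℝ, F p * (P p.1 * Q p.2) =
        (P p.1 * f₁ p.1) * (Q p.2 * f₂ p.2) + ∑' n, A n p.1 * B n p.2 := by
      intro p
      have h2 : ∑' n, A n p.1 * B n p.2 = (P p.1 * Q p.2) * ∑' n, u n p := by
        rw [← tsum_mul_left]
        exact tsum_congr fun n => by rw [hAdef, hBdef, hudef]; ring
      rw [hFeq p, h2]; ring
    have hnorm : ∀ n, ∫ p : ℝ × ℝ, ‖A n p.1 * B n p.2‖ = (∫ x, |A n x|) * (∫ y, |B n y|) := by
      intro n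
      simp only [Real.norm_eq_abs, abs_mul]
      rw [Measure.volume_eq_prod ℝ ℝ]
      exact integral_prod_mul (fun x => |A n x|) (fun y => |B n y|)
    have hsumnorm : Summable (fun n => ∫ p : ℝ × ℝ, ‖A n p.1 * B n p.2‖) := by
      have hmaj : Summable (fun n : ℕ => (|ρ (n+1)| * (Cp * c (n+1))) * (Cq * d (n+1))) := by
        have he : (fun n : ℕ => (|ρ (n+1)| * (Cp * c (n+1))) * (Cq * d (n+1)))
            = fun n => (Cp * Cq) * (|ρ (n+1)| * c (n+1) * d (n+1)) := by
          funext n; ring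
        rw [he]; exact hsum.mul_left _
      refine Summable.of_nonneg_of_le (fun n => integral_nonneg (fun p => norm_nonneg _))
        (fun n => ?_) hmaj
      rw [hnorm n]
      exact mul_le_mul (hAbs n) (hBbs n) (integral_nonneg (fun y => abs_nonneg _))
        (mul_nonneg (abs_nonneg _) (mul_nonneg hCp0 (hc0 _)))
    have hprodint : Integrable (fun p : ℝ × ℝ => (P p.1 * f₁ p.1) * (Q p.2 * f₂ p.2)) := by
      rw [Measure.volume_eq_prod ℝ ℝ]; exact hA0int.mul_prod hB0int
    have hFint : Integrable (fun p : ℝ × ℝ => F p * (P p.1 * Q p.2)) := by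
      have hff : Integrable (fun p : ℝ × ℝ => f₁ p.1 * f₂ p.2) := by
        rw [Measure.volume_eq_prod ℝ ℝ]
        exact (LancAux.integrable_density hf₁).mul_prod (LancAux.integrable_density hf₂)
      refine Integrable.mono' (hff.const_mul (2 * (Cp * Cq)))
        ((hFmeas.mul ((hP.measurable.comp measurable_fst).mul
          (hQ.measurable.comp measurable_snd))).aestronglyMeasurable) (ae_of_all _ fun p => ?_)
      by_cases hx : p.1 ∈ Set.Icc α₁ ω₁
      · by_cases hy : p.2 ∈ Set.Icc α₂ ω₂
        · have hFle : F p ≤ 2 * (f₁ p.1 * f₂ p.2) := by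
            rw [hFeq p]
            have := (abs_le.1 (htub p)).2
            linarith
          have hPQ : |P p.1 * Q p.2| ≤ Cp * Cq := by
            rw [abs_mul]
            exact mul_le_mul (hCp _ hx) (hCq _ hy) (abs_nonneg _) hCp0
          rw [Real.norm_eq_abs, abs_mul, abs_of_nonneg (hF0 p)]
          calc F p * |P p.1 * Q p.2| ≤ (2 * (f₁ p.1 * f₂ p.2)) * (Cp * Cq) :=
                mul_le_mul hFle hPQ (abs_nonneg _)
                  (by linarith [mul_nonneg (hf₁.1 p.1) (hf₂.1 p.2)])
            _ = 2 * (Cp * Cq) * (f₁ p.1 * f₂ p.2) := by ring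
        · rw [hFzero p (Or.inr hy)]
          simp only [zero_mul, norm_zero]
          have : 0 ≤ f₁ p.1 * f₂ p.2 := mul_nonneg (hf₁.1 _) (hf₂.1 _)
          exact mul_nonneg (mul_nonneg (by norm_num) (mul_nonneg hCp0 hCq0)) this
      · rw [hFzero p (Or.inl hx)]
        simp only [zero_mul, norm_zero]
        have : 0 ≤ f₁ p.1 * f₂ p.2 := mul_nonneg (hf₁.1 _) (hf₂.1 _)
        exact mul_nonneg (mul_nonneg (by norm_num) (mul_nonneg hCp0 hCq0)) this
    have htail : Integrable (fun p : ℝ × ℝ => ∑' n, A n p.1 * B n p.2) := by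
      have he : (fun p : ℝ × ℝ => ∑' n, A n p.1 * B n p.2)
          = fun p => F p * (P p.1 * Q p.2) - (P p.1 * f₁ p.1) * (Q p.2 * f₂ p.2) := by
        funext p; rw [hFPQ p]; ring
      rw [he]
      exact hFint.sub hprodint
    calc ∫ p, P p.1 * Q p.2 ∂ν
        = ∫ p, F p * (P p.1 * Q p.2) := hInt _
      _ = ∫ p : ℝ × ℝ, ((P p.1 * f₁ p.1) * (Q p.2 * f₂ p.2) + ∑' n, A n p.1 * B n p.2) :=
          congrArg _ (funext hFPQ)
      _ = (∫ p : ℝ × ℝ, (P p.1 * f₁ p.1) * (Q p.2 * f₂ p.2)) +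
            ∫ p : ℝ × ℝ, ∑' n, A n p.1 * B n p.2 := integral_add hprodint htail
      _ = (∫ x, P x * f₁ x) * (∫ y, Q y * f₂ y) +
            ∑' n, ∫ p : ℝ × ℝ, A n p.1 * B n p.2 := by
          rw [← integral_tsum_of_summable_integral_norm hvint hsumnorm]
          congr 1
          rw [Measure.volume_eq_prod ℝ ℝ]
          exact integral_prod_mul (fun x => P x * f₁ x) (fun y => Q y * f₂ y)
      _ = (∫ x, P x * f₁ x) * (∫ y, Q y * f₂ y) +
            ∑' n : ℕ, ρ (n+1) * ((∫ x, P x * (φ (n+1)).eval x * f₁ x) *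
              (∫ y, Q y * (ψ (n+1)).eval y * f₂ y)) := by
          congr 1
          refine tsum_congr fun n => ?_
          have h1 : ∫ p : ℝ × ℝ, A n p.1 * B n p.2 = (∫ x, A n x) * (∫ y, B n y) := by
            rw [Measure.volume_eq_prod ℝ ℝ]; exact integral_prod_mul _ _
          have hAn : ∫ x, A n x = ρ (n+1) * ∫ x, P x * (φ (n+1)).eval x * f₁ x := by
            rw [show A n = fun x => ρ (n+1) * (P x * (φ (n+1)).eval x * f₁ x) from
              funext fun x => by rw [hAdef]; ring]
            rw [integral_const_mul]
          have hBn : (∫ y, B n y) = ∫ y, Q y * (ψ (n+1)).eval y * f₂ y := rfl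
          rw [h1, hAn, hBn, mul_assoc]
  -- orthonormal polynomial structure
  obtain ⟨A₁, hA₁pos, hA₁e, hmom₁⟩ := LancAux.ortho_struct hf₁ hm₁ hφ
  obtain ⟨A₂, hA₂pos, hA₂e, hmom₂⟩ := LancAux.ortho_struct hf₂ hm₂ hψ
  set m₁ : ℝ := ∫ t, t * f₁ t with hm₁def
  set m₂ : ℝ := ∫ t, t * f₂ t with hm₂def
  have hx₁ : ∀ x : ℝ, x - m₁ = A₁⁻¹ * (φ 1).eval x := by
    intro x; rw [hA₁e x]; field_simp
  have hx₂ : ∀ y : ℝ, y - m₂ = A₂⁻¹ * (ψ 1).eval y := by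
    intro y; rw [hA₂e y]; field_simp
  have hf₂one : ∫ y, (1 : ℝ) * f₂ y = 1 := by simp only [one_mul]; exact hf₂.2.2
  have hψz : ∀ n : ℕ, ∫ y, (1 : ℝ) * (ψ (n+1)).eval y * f₂ y = 0 := by
    intro n
    simp only [one_mul]
    exact hmom₂ (n+1) (by omega)
  -- expectation of X
  have E1 : ∫ p, p.1 ∂ν = m₁ := by
    have h := key (fun x => x) (fun _ => (1 : ℝ)) continuous_id continuous_const
    have h' : ∫ p : ℝ × ℝ, p.1 * 1 ∂ν = (∫ x, x * f₁ x) * (∫ y, (1:ℝ) * f₂ y) +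
        ∑' n : ℕ, ρ (n+1) * ((∫ x, x * (φ (n+1)).eval x * f₁ x) *
          (∫ y, (1:ℝ) * (ψ (n+1)).eval y * f₂ y)) := h
    have h'' : ∫ p : ℝ × ℝ, p.1 * 1 ∂ν = ∫ p, p.1 ∂ν := by simp only [mul_one]
    rw [← h'', h', hf₂one, mul_one]
    have hz : ∀ n : ℕ, ρ (n+1) * ((∫ x, x * (φ (n+1)).eval x * f₁ x) *
        (∫ y, (1:ℝ) * (ψ (n+1)).eval y * f₂ y)) = 0 := by
      intro n; rw [hψz n, mul_zero, mul_zero]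
    rw [tsum_congr hz, tsum_zero, add_zero]
  have E2 : ∫ p, p.2 ∂ν = m₂ := by
    have h := key (fun _ => (1 : ℝ)) (fun y => y) continuous_const continuous_id
    have h' : ∫ p : ℝ × ℝ, (1:ℝ) * p.2 ∂ν = (∫ x, (1:ℝ) * f₁ x) * (∫ y, y * f₂ y) +
        ∑' n : ℕ, ρ (n+1) * ((∫ x, (1:ℝ) * (φ (n+1)).eval x * f₁ x) *
          (∫ y, y * (ψ (n+1)).eval y * f₂ y)) := h
    have h'' : ∫ p : ℝ × ℝ, (1:ℝ) * p.2 ∂ν = ∫ p, p.2 ∂ν := by simp only [one_mul]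
    rw [← h'', h']
    have hφz : ∀ n : ℕ, ∫ x, (1 : ℝ) * (φ (n+1)).eval x * f₁ x = 0 := by
      intro n; simp only [one_mul]; exact hmom₁ (n+1) (by omega)
    have hf₁one : ∫ x, (1 : ℝ) * f₁ x = 1 := by simp only [one_mul]; exact hf₁.2.2
    rw [hf₁one, one_mul]
    have hz : ∀ n : ℕ, ρ (n+1) * ((∫ x, (1:ℝ) * (φ (n+1)).eval x * f₁ x) *
        (∫ y, y * (ψ (n+1)).eval y * f₂ y)) = 0 := by
      intro n; rw [hφz n, zero_mul, mul_zero]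
    rw [tsum_congr hz, tsum_zero, add_zero]
  have hXY : AEMeasurable (fun ω => (X ω, Y ω)) μ := (hX.prodMk hY).aemeasurable
  have hEX : ∫ ω, X ω ∂μ = m₁ := by
    have h := integral_map (f := fun p : ℝ × ℝ => p.1) hXY
      measurable_fst.aestronglyMeasurable
    rw [hjoint] at h
    rw [← E1, ← h]
  have hEY : ∫ ω, Y ω ∂μ = m₂ := by
    have h := integral_map (f := fun p : ℝ × ℝ => p.2) hXY
      measurable_snd.aestronglyMeasurable
    rw [hjoint] at h
    rw [← E2, ← h]
  -- a.e. boundedness and Memℒp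
  have hνX : ν ((Set.Icc α₁ ω₁)ᶜ ×ˢ (Set.univ : Set ℝ)) = 0 := by
    have hA : MeasurableSet ((Set.Icc α₁ ω₁)ᶜ ×ˢ (Set.univ : Set ℝ)) :=
      measurableSet_Icc.compl.prod MeasurableSet.univ
    rw [hνdef, withDensity_apply _ hA]
    have hz : ∀ p ∈ (Set.Icc α₁ ω₁)ᶜ ×ˢ (Set.univ : Set ℝ),
        ENNReal.ofReal (lancaster f₁ f₂ φ ψ ρ p.1 p.2) = (0 : ℝ≥0∞) := by
      intro p hp
      have := hFzero p (Or.inl hp.1)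
      rw [hFdef] at this
      simp only [] at this
      rw [this]
      exact ENNReal.ofReal_zero
    rw [setLIntegral_congr_fun hA hz, lintegral_zero]
  have hνY : ν ((Set.univ : Set ℝ) ×ˢ (Set.Icc α₂ ω₂)ᶜ) = 0 := by
    have hA : MeasurableSet ((Set.univ : Set ℝ) ×ˢ (Set.Icc α₂ ω₂)ᶜ) :=
      MeasurableSet.univ.prod measurableSet_Icc.compl
    rw [hνdef, withDensity_apply _ hA]
    have hz : ∀ p ∈ (Set.univ : Set ℝ) ×ˢ (Set.Icc α₂ ω₂)ᶜ,
        ENNReal.ofReal (lancaster f₁ f₂ φ ψ ρ p.1 p.2) = (0 : ℝ≥0∞) := by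
      intro p hp
      have := hFzero p (Or.inr hp.2)
      rw [hFdef] at this
      simp only [] at this
      rw [this]
      exact ENNReal.ofReal_zero
    rw [setLIntegral_congr_fun hA hz, lintegral_zero]
  have haeX : ∀ᵐ ω ∂μ, X ω ∈ Set.Icc α₁ ω₁ := by
    rw [ae_iff]
    have hset : {ω | ¬ X ω ∈ Set.Icc α₁ ω₁} =
        (fun ω => (X ω, Y ω)) ⁻¹' ((Set.Icc α₁ ω₁)ᶜ ×ˢ (Set.univ : Set ℝ)) := by
      ext ω; simp
    rw [hset, ← Measure.map_apply (hX.prodMk hY)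
      (measurableSet_Icc.compl.prod MeasurableSet.univ), hjoint, hνX]
  have haeY : ∀ᵐ ω ∂μ, Y ω ∈ Set.Icc α₂ ω₂ := by
    rw [ae_iff]
    have hset : {ω | ¬ Y ω ∈ Set.Icc α₂ ω₂} =
        (fun ω => (X ω, Y ω)) ⁻¹' ((Set.univ : Set ℝ) ×ˢ (Set.Icc α₂ ω₂)ᶜ) := by
      ext ω; simp
    rw [hset, ← Measure.map_apply (hX.prodMk hY)
      (MeasurableSet.univ.prod measurableSet_Icc.compl), hjoint, hνY]
  have hmemX : MemLp X 2 μ :=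
    MemLp.of_bound hX.aestronglyMeasurable (max |α₁| |ω₁|)
      (haeX.mono fun ω h => by
        rw [Real.norm_eq_abs]; exact abs_le_max_abs_abs h.1 h.2)
  have hmemY : MemLp Y 2 μ :=
    MemLp.of_bound hY.aestronglyMeasurable (max |α₂| |ω₂|)
      (haeY.mono fun ω h => by
        rw [Real.norm_eq_abs]; exact abs_le_max_abs_abs h.1 h.2)
  -- second moments of the marginals
  have hV₁ : ∫ x, (x - m₁)^2 * f₁ x = A₁⁻¹ * A₁⁻¹ := by
    rw [show (fun x => (x - m₁)^2 * f₁ x)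
        = fun x => (A₁⁻¹ * A₁⁻¹) * ((φ 1).eval x * (φ 1).eval x * f₁ x) from
      funext fun x => by rw [sq, hx₁ x]; ring]
    rw [integral_const_mul, hφ.2.2 1 1, if_pos rfl, mul_one]
  have hV₂ : ∫ y, (y - m₂)^2 * f₂ y = A₂⁻¹ * A₂⁻¹ := by
    rw [show (fun y => (y - m₂)^2 * f₂ y)
        = fun y => (A₂⁻¹ * A₂⁻¹) * ((ψ 1).eval y * (ψ 1).eval y * f₂ y) from
      funext fun y => by rw [sq, hx₂ y]; ring]
    rw [integral_const_mul, hψ.2.2 1 1, if_pos rfl, mul_one]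
  -- variance of X
  have hVX : variance X μ = A₁⁻¹ * A₁⁻¹ := by
    rw [variance_eq_integral hX.aemeasurable]
    rw [hEX]
    have h2 : ∫ ω, (X ω - m₁)^2 ∂μ = ∫ p, (p.1 - m₁)^2 ∂ν := by
      have h := integral_map (f := fun p : ℝ × ℝ => (p.1 - m₁)^2) hXY
        ((measurable_fst.sub measurable_const).pow_const 2).aestronglyMeasurable
      rw [hjoint] at h
      rw [← h]
    rw [h2]
    have h3 : ∫ p, (p.1 - m₁)^2 ∂ν = (∫ x, (x - m₁)^2 * f₁ x) * (∫ y, (1:ℝ) * f₂ y) +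
        ∑' n : ℕ, ρ (n+1) * ((∫ x, (x - m₁)^2 * (φ (n+1)).eval x * f₁ x) *
          (∫ y, (1:ℝ) * (ψ (n+1)).eval y * f₂ y)) := by
      have h4 : ∫ p : ℝ × ℝ, (p.1 - m₁)^2 * (1:ℝ) ∂ν = ∫ p, (p.1 - m₁)^2 ∂ν := by
        simp only [mul_one]
      rw [← h4]
      exact key (fun x => (x - m₁)^2) (fun _ => (1:ℝ))
        ((continuous_id.sub continuous_const).pow 2) continuous_const
    rw [h3, hf₂one, mul_one, hV₁]
    have hz : ∀ n : ℕ, ρ (n+1) * ((∫ x, (x - m₁)^2 * (φ (n+1)).eval x * f₁ x) *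
        (∫ y, (1:ℝ) * (ψ (n+1)).eval y * f₂ y)) = 0 := by
      intro n; rw [hψz n, mul_zero, mul_zero]
    rw [tsum_congr hz, tsum_zero, add_zero]
  have hVY : variance Y μ = A₂⁻¹ * A₂⁻¹ := by
    rw [variance_eq_integral hY.aemeasurable]
    rw [hEY]
    have h2 : ∫ ω, (Y ω - m₂)^2 ∂μ = ∫ p, (p.2 - m₂)^2 ∂ν := by
      have h := integral_map (f := fun p : ℝ × ℝ => (p.2 - m₂)^2) hXY
        ((measurable_snd.sub measurable_const).pow_const 2).aestronglyMeasurable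
      rw [hjoint] at h
      rw [← h]
    rw [h2]
    have h3 : ∫ p, (p.2 - m₂)^2 ∂ν = (∫ x, (1:ℝ) * f₁ x) * (∫ y, (y - m₂)^2 * f₂ y) +
        ∑' n : ℕ, ρ (n+1) * ((∫ x, (1:ℝ) * (φ (n+1)).eval x * f₁ x) *
          (∫ y, (y - m₂)^2 * (ψ (n+1)).eval y * f₂ y)) := by
      have h4 : ∫ p : ℝ × ℝ, (1:ℝ) * (p.2 - m₂)^2 ∂ν = ∫ p, (p.2 - m₂)^2 ∂ν := by
        simp only [one_mul]
      rw [← h4]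
      exact key (fun _ => (1:ℝ)) (fun y => (y - m₂)^2)
        continuous_const ((continuous_id.sub continuous_const).pow 2)
    have hf₁one : ∫ x, (1 : ℝ) * f₁ x = 1 := by simp only [one_mul]; exact hf₁.2.2
    rw [h3, hf₁one, one_mul, hV₂]
    have hz : ∀ n : ℕ, ρ (n+1) * ((∫ x, (1:ℝ) * (φ (n+1)).eval x * f₁ x) *
        (∫ y, (y - m₂)^2 * (ψ (n+1)).eval y * f₂ y)) = 0 := by
      intro n
      rw [show ∫ x, (1:ℝ) * (φ (n+1)).eval x * f₁ x = 0 from by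
        simp only [one_mul]; exact hmom₁ (n+1) (by omega), zero_mul, mul_zero]
    rw [tsum_congr hz, tsum_zero, add_zero]
  -- covariance
  have hJ : ∀ n : ℕ, ∫ x, (x - m₁) * (φ (n+1)).eval x * f₁ x
      = A₁⁻¹ * (if 1 = n+1 then (1:ℝ) else 0) := by
    intro n
    rw [show (fun x => (x - m₁) * (φ (n+1)).eval x * f₁ x)
        = fun x => A₁⁻¹ * ((φ 1).eval x * (φ (n+1)).eval x * f₁ x) from
      funext fun x => by rw [hx₁ x]; ring]
    rw [integral_const_mul, hφ.2.2 1 (n+1)]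
  have hK : ∀ n : ℕ, ∫ y, (y - m₂) * (ψ (n+1)).eval y * f₂ y
      = A₂⁻¹ * (if 1 = n+1 then (1:ℝ) else 0) := by
    intro n
    rw [show (fun y => (y - m₂) * (ψ (n+1)).eval y * f₂ y)
        = fun y => A₂⁻¹ * ((ψ 1).eval y * (ψ (n+1)).eval y * f₂ y) from
      funext fun y => by rw [hx₂ y]; ring]
    rw [integral_const_mul, hψ.2.2 1 (n+1)]
  have hI₁ : ∫ x, (x - m₁) * f₁ x = 0 := by
    rw [show (fun x => (x - m₁) * f₁ x) = fun x => A₁⁻¹ * ((φ 1).eval x * f₁ x) from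
      funext fun x => by rw [hx₁ x]; ring]
    rw [integral_const_mul, hmom₁ 1 le_rfl, mul_zero]
  have hcov : covar μ X Y = ρ 1 * (A₁⁻¹ * A₂⁻¹) := by
    unfold covar
    rw [hEX, hEY]
    have h2 : ∫ ω, (X ω - m₁) * (Y ω - m₂) ∂μ = ∫ p, (p.1 - m₁) * (p.2 - m₂) ∂ν := by
      have h := integral_map (f := fun p : ℝ × ℝ => (p.1 - m₁) * (p.2 - m₂)) hXY
        ((measurable_fst.sub measurable_const).mul
          (measurable_snd.sub measurable_const)).aestronglyMeasurable
      rw [hjoint] at h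
      rw [← h]
    rw [h2]
    have h3 : ∫ p, (p.1 - m₁) * (p.2 - m₂) ∂ν =
        (∫ x, (x - m₁) * f₁ x) * (∫ y, (y - m₂) * f₂ y) +
          ∑' n : ℕ, ρ (n+1) * ((∫ x, (x - m₁) * (φ (n+1)).eval x * f₁ x) *
            (∫ y, (y - m₂) * (ψ (n+1)).eval y * f₂ y)) :=
      key (fun x => x - m₁) (fun y => y - m₂)
        (continuous_id.sub continuous_const) (continuous_id.sub continuous_const)
    rw [h3, hI₁, zero_mul, zero_add]
    rw [tsum_eq_single 0 (fun n hn => by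
      rw [hJ n, hK n, if_neg (by omega)]
      ring)]
    rw [hJ 0, hK 0, if_pos rfl]
    ring
  -- conclusion
  unfold pearson
  rw [hcov, hVX, hVY, Real.sqrt_mul_self (inv_nonneg.2 hA₁pos.le),
    Real.sqrt_mul_self (inv_nonneg.2 hA₂pos.le), mul_div_assoc,
    div_self (ne_of_gt (mul_pos (inv_pos.2 hA₁pos) (inv_pos.2 hA₂pos))), mul_one]
end

section
/- There exists a pair of real random variables (X,Y) such that E(X|Y) = a₁Y + a₀ a.s. and E(Y|X) = b₁X + b₀ a.s. with a₁b₁ ≠ 0, and yet R(X,Y) > |ρ(X,Y)| > 0. In particular, strictly linear regression in both directions does not imply that the maximal correlation equals the absolute Pearson correlation. -/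
open MeasureTheory ProbabilityTheory Real
open scoped ENNReal RealInnerProductSpace

noncomputable def m0 : Measure (ℝ × ℝ) :=
  (3/10 : ℝ≥0∞) • Measure.dirac (1,1) + (3/10 : ℝ≥0∞) • Measure.dirac (-1,-1)
  + (1/10 : ℝ≥0∞) • Measure.dirac (1,-1) + (1/10 : ℝ≥0∞) • Measure.dirac (-1,1)
  + (2/10 : ℝ≥0∞) • Measure.dirac (0,0)

lemma lint_m0 (f : ℝ × ℝ → ℝ≥0∞) :
    ∫⁻ p, f p ∂m0 = 3/10 * f (1,1) + 3/10 * f (-1,-1) + 1/10 * f (1,-1)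
      + 1/10 * f (-1,1) + 2/10 * f (0,0) := by
  simp [m0, lintegral_add_measure, lintegral_smul_measure, lintegral_dirac]

lemma integrable_m0 (f : ℝ × ℝ → ℝ) (hf : AEStronglyMeasurable f m0) : Integrable f m0 := by
  refine ⟨hf, ?_⟩
  rw [hasFiniteIntegral_def, lint_m0]
  refine ENNReal.add_lt_top.2 ⟨ENNReal.add_lt_top.2 ⟨ENNReal.add_lt_top.2 ⟨ENNReal.add_lt_top.2
    ⟨?_, ?_⟩, ?_⟩, ?_⟩, ?_⟩ <;>
    exact ENNReal.mul_lt_top (ENNReal.div_lt_top (by norm_num) (by norm_num)) ENNReal.coe_lt_top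

instance : IsProbabilityMeasure m0 := by
  constructor
  rw [← MeasureTheory.lintegral_one, lint_m0]
  simp only [Pi.one_apply, mul_one]
  rw [ENNReal.div_add_div_same, ENNReal.div_add_div_same, ENNReal.div_add_div_same,
    ENNReal.div_add_div_same]
  norm_num
  exact ENNReal.div_self (by norm_num) (by norm_num)

lemma memL2_m0 (f : ℝ × ℝ → ℝ) (hf : AEStronglyMeasurable f m0) : MemLp f 2 m0 := by
  refine ⟨hf, ?_⟩
  rw [eLpNorm_eq_lintegral_rpow_enorm_toReal (by norm_num) (by norm_num), lint_m0]
  refine ENNReal.rpow_lt_top_of_nonneg (by norm_num) (ne_of_lt ?_)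
  refine ENNReal.add_lt_top.2 ⟨ENNReal.add_lt_top.2 ⟨ENNReal.add_lt_top.2 ⟨ENNReal.add_lt_top.2
    ⟨?_, ?_⟩, ?_⟩, ?_⟩, ?_⟩ <;>
    exact ENNReal.mul_lt_top (ENNReal.div_lt_top (by norm_num) (by norm_num))
      (ENNReal.rpow_lt_top_of_nonneg (by norm_num) enorm_ne_top)

lemma int_m0 (f : ℝ × ℝ → ℝ) (hf : AEStronglyMeasurable f m0) :
    ∫ p, f p ∂m0 = 3/10 * f (1,1) + 3/10 * f (-1,-1) + 1/10 * f (1,-1)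
      + 1/10 * f (-1,1) + 2/10 * f (0,0) := by
  have h := integrable_m0 f hf
  simp only [m0, integrable_add_measure] at h
  obtain ⟨⟨⟨⟨h1, h2⟩, h3⟩, h4⟩, h5⟩ := h
  rw [m0, integral_add_measure (((h1.add_measure h2).add_measure h3).add_measure h4) h5,
    integral_add_measure ((h1.add_measure h2).add_measure h3) h4,
    integral_add_measure (h1.add_measure h2) h3, integral_add_measure h1 h2]
  simp [integral_smul_measure, integral_dirac]


lemma meas_X : Measurable (fun p : ℝ × ℝ => p.1) := measurable_fst
lemma meas_X2 : Measurable (fun p : ℝ × ℝ => p.1 ^ 2) := measurable_fst.pow_const 2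

lemma mean_X : ∫ p, (fun p : ℝ × ℝ => p.1) p ∂m0 = 0 := by
  rw [int_m0 _ meas_X.aestronglyMeasurable]; norm_num

theorem MeasureTheory.MemLp.variance_eq {Ω : Type*} [MeasurableSpace Ω] {μ : Measure Ω}
    {X : Ω → ℝ} (hX : MemLp X 2 μ) : variance X μ = μ[((X - fun _ => μ[X]) ^ (2:ℕ) : Ω → ℝ)] :=
  variance_eq_integral hX.aestronglyMeasurable.aemeasurable

lemma var_X : variance (fun p : ℝ × ℝ => p.1) m0 = 4/5 := by
  rw [(memL2_m0 _ meas_X.aestronglyMeasurable).variance_eq]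
  rw [show ((fun p : ℝ × ℝ => p.1) - fun _ => ∫ q, (fun p : ℝ × ℝ => p.1) q ∂m0) ^ (2:ℕ)
      = fun p : ℝ × ℝ => ((fun p : ℝ × ℝ => p.1) p - ∫ q, (fun p : ℝ × ℝ => p.1) q ∂m0)^(2:ℕ)
      from rfl,
    int_m0 _ (by measurability), mean_X]
  norm_num

lemma mean_X2 : ∫ p, (fun p : ℝ × ℝ => p.1 ^ 2) p ∂m0 = 4/5 := by
  rw [int_m0 _ meas_X2.aestronglyMeasurable]; norm_num

lemma var_X2 : variance (fun p : ℝ × ℝ => p.1 ^ 2) m0 = 4/25 := by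
  rw [(memL2_m0 _ meas_X2.aestronglyMeasurable).variance_eq]
  rw [show ((fun p : ℝ × ℝ => p.1^2) - fun _ => ∫ q, (fun p : ℝ × ℝ => p.1^2) q ∂m0) ^ (2:ℕ)
      = fun p : ℝ × ℝ => ((fun p : ℝ × ℝ => p.1^2) p - ∫ q, (fun p : ℝ × ℝ => p.1^2) q ∂m0)^(2:ℕ)
      from rfl,
    int_m0 _ (by measurability), mean_X2]
  norm_num

lemma covar_XY : covar m0 (fun p : ℝ × ℝ => p.1) (fun p : ℝ × ℝ => p.2) = 2/5 := by
  unfold covar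
  have h1 : ∫ a, (fun p : ℝ × ℝ => p.1) a ∂m0 = 0 := mean_X
  have h2 : ∫ a, (fun p : ℝ × ℝ => p.2) a ∂m0 = 0 := by
    rw [int_m0 _ measurable_snd.aestronglyMeasurable]; norm_num
  rw [h1, h2, int_m0 _ (by measurability)]
  norm_num


lemma sqrt_var_eq_norm {Ω : Type*} [MeasurableSpace Ω] {μ : Measure Ω} [IsFiniteMeasure μ]
    {f : Ω → ℝ} (hf : MemLp f 2 μ) :
    Real.sqrt (variance f μ)
      = ‖(hf.sub (memLp_const (∫ a, f a ∂μ))).toLp (f - fun _ => ∫ a, f a ∂μ)‖ := by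
  set F := (hf.sub (memLp_const (∫ a, f a ∂μ))).toLp (f - fun _ => ∫ a, f a ∂μ) with hF
  have h1 : variance f μ = ∫ ω, (f ω - ∫ a, f a ∂μ)^(2:ℕ) ∂μ := hf.variance_eq
  have h2 : (inner ℝ F F : ℝ) = ∫ ω, (f ω - ∫ a, f a ∂μ)^(2:ℕ) ∂μ := by
    rw [MeasureTheory.L2.inner_def]
    refine integral_congr_ae ?_
    filter_upwards [MemLp.coeFn_toLp (hf.sub (memLp_const (∫ a, f a ∂μ)))] with ω hω
    rw [← hF] at hω
    simp [hω, RCLike.inner_apply, starRingEnd_apply, sq]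
  rw [h1, ← h2, real_inner_self_eq_norm_sq, Real.sqrt_sq (norm_nonneg _)]

lemma abs_pearson_le_one {Ω : Type*} [MeasurableSpace Ω] (μ : Measure Ω) [IsFiniteMeasure μ]
    (f g : Ω → ℝ) (hf : MemLp f 2 μ) (hg : MemLp g 2 μ) : |pearson μ f g| ≤ 1 := by
  set F := (hf.sub (memLp_const (∫ a, f a ∂μ))).toLp (f - fun _ => ∫ a, f a ∂μ) with hF
  set G := (hg.sub (memLp_const (∫ a, g a ∂μ))).toLp (g - fun _ => ∫ a, g a ∂μ) with hG
  have hcov : covar μ f g = (inner ℝ F G : ℝ) := by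
    rw [MeasureTheory.L2.inner_def]
    refine (integral_congr_ae ?_).symm
    filter_upwards [MemLp.coeFn_toLp (hf.sub (memLp_const (∫ a, f a ∂μ))),
      MemLp.coeFn_toLp (hg.sub (memLp_const (∫ a, g a ∂μ)))] with ω h1 h2
    rw [← hF] at h1; rw [← hG] at h2
    simp [h1, h2, RCLike.inner_apply, starRingEnd_apply, mul_comm]
  rw [pearson, hcov, sqrt_var_eq_norm hf, sqrt_var_eq_norm hg, abs_div,
    abs_of_nonneg (by positivity : (0:ℝ) ≤ ‖F‖ * ‖G‖)]
  exact div_le_one_of_le₀ (abs_real_inner_le_norm F G) (by positivity)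

lemma setInt_m0 (f : ℝ × ℝ → ℝ) (hf : Measurable f) {s : Set (ℝ × ℝ)} (hs : MeasurableSet s) :
    ∫ p in s, f p ∂m0 = 3/10 * s.indicator f (1,1) + 3/10 * s.indicator f (-1,-1)
      + 1/10 * s.indicator f (1,-1) + 1/10 * s.indicator f (-1,1)
      + 2/10 * s.indicator f (0,0) := by
  rw [← integral_indicator hs, int_m0 _ (hf.indicator hs).aestronglyMeasurable]

lemma condexp_X :
    m0[(fun p => p.1) | MeasurableSpace.comap (fun p : ℝ × ℝ => p.2) inferInstance]
      =ᵐ[m0] fun p => (1/2 : ℝ) * p.2 + 0 := by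
  have hm : MeasurableSpace.comap (fun p : ℝ × ℝ => p.2) inferInstance
      ≤ (inferInstance : MeasurableSpace (ℝ × ℝ)) := measurable_snd.comap_le
  refine (ae_eq_condExp_of_forall_setIntegral_eq hm
    (integrable_m0 _ meas_X.aestronglyMeasurable) ?_ ?_ ?_).symm
  · intro s _ _
    exact (integrable_m0 _ (by measurability)).integrableOn
  · rintro s ⟨t, ht, rfl⟩ _
    rw [setInt_m0 _ (by measurability) (measurable_snd ht),
      setInt_m0 _ meas_X (measurable_snd ht)]
    by_cases h1 : (1:ℝ) ∈ t <;> by_cases h2 : (-1:ℝ) ∈ t <;> by_cases h3 : (0:ℝ) ∈ t <;>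
      simp [Set.indicator_apply, Set.mem_preimage, h1, h2, h3] <;> norm_num
  · exact ⟨fun p => (1/2 : ℝ) * p.2 + 0,
      (((comap_measurable _).const_mul _).add_const _).stronglyMeasurable,
      ae_eq_refl _⟩

lemma condexp_Y :
    m0[(fun p => p.2) | MeasurableSpace.comap (fun p : ℝ × ℝ => p.1) inferInstance]
      =ᵐ[m0] fun p => (1/2 : ℝ) * p.1 + 0 := by
  have hm : MeasurableSpace.comap (fun p : ℝ × ℝ => p.1) inferInstance
      ≤ (inferInstance : MeasurableSpace (ℝ × ℝ)) := measurable_fst.comap_le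
  refine (ae_eq_condExp_of_forall_setIntegral_eq hm
    (integrable_m0 _ measurable_snd.aestronglyMeasurable) ?_ ?_ ?_).symm
  · intro s _ _
    exact (integrable_m0 _ (by measurability)).integrableOn
  · rintro s ⟨t, ht, rfl⟩ _
    rw [setInt_m0 _ (by measurability) (measurable_fst ht),
      setInt_m0 _ measurable_snd (measurable_fst ht)]
    by_cases h1 : (1:ℝ) ∈ t <;> by_cases h2 : (-1:ℝ) ∈ t <;> by_cases h3 : (0:ℝ) ∈ t <;>
      simp [Set.indicator_apply, Set.mem_preimage, h1, h2, h3] <;> norm_num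
  · exact ⟨fun p => (1/2 : ℝ) * p.1 + 0,
      (((comap_measurable _).const_mul _).add_const _).stronglyMeasurable,
      ae_eq_refl _⟩

lemma meas_Y2 : Measurable (fun p : ℝ × ℝ => p.2 ^ 2) := measurable_snd.pow_const 2

lemma var_Y : variance (fun p : ℝ × ℝ => p.2) m0 = 4/5 := by
  rw [(memL2_m0 _ measurable_snd.aestronglyMeasurable).variance_eq]
  rw [show ((fun p : ℝ × ℝ => p.2) - fun _ => ∫ q, (fun p : ℝ × ℝ => p.2) q ∂m0) ^ (2:ℕ)
      = fun p : ℝ × ℝ => ((fun p : ℝ × ℝ => p.2) p - ∫ q, (fun p : ℝ × ℝ => p.2) q ∂m0)^(2:ℕ)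
      from rfl,
    int_m0 _ (by measurability), int_m0 _ measurable_snd.aestronglyMeasurable]
  norm_num

lemma mean_Y2 : ∫ p, (fun p : ℝ × ℝ => p.2 ^ 2) p ∂m0 = 4/5 := by
  rw [int_m0 _ meas_Y2.aestronglyMeasurable]; norm_num

lemma var_Y2 : variance (fun p : ℝ × ℝ => p.2 ^ 2) m0 = 4/25 := by
  rw [(memL2_m0 _ meas_Y2.aestronglyMeasurable).variance_eq]
  rw [show ((fun p : ℝ × ℝ => p.2^2) - fun _ => ∫ q, (fun p : ℝ × ℝ => p.2^2) q ∂m0) ^ (2:ℕ)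
      = fun p : ℝ × ℝ => ((fun p : ℝ × ℝ => p.2^2) p - ∫ q, (fun p : ℝ × ℝ => p.2^2) q ∂m0)^(2:ℕ)
      from rfl,
    int_m0 _ (by measurability), mean_Y2]
  norm_num

lemma covar_sq : covar m0 (fun p : ℝ × ℝ => p.1 ^ 2) (fun p : ℝ × ℝ => p.2 ^ 2) = 4/25 := by
  unfold covar
  rw [show (∫ a, (fun p : ℝ × ℝ => p.1 ^ 2) a ∂m0) = 4/5 from mean_X2,
    show (∫ a, (fun p : ℝ × ℝ => p.2 ^ 2) a ∂m0) = 4/5 from mean_Y2,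
    int_m0 _ (by measurability)]
  norm_num

lemma pearson_XY : pearson m0 (fun p : ℝ × ℝ => p.1) (fun p : ℝ × ℝ => p.2) = 1/2 := by
  rw [pearson, covar_XY, var_X, var_Y, Real.mul_self_sqrt (by norm_num)]
  norm_num

lemma pearson_sq : pearson m0 (fun p : ℝ × ℝ => p.1 ^ 2) (fun p : ℝ × ℝ => p.2 ^ 2) = 1 := by
  rw [pearson, covar_sq, var_X2, var_Y2, Real.mul_self_sqrt (by norm_num)]
  norm_num

/-- There exists a pair `(X,Y)` of real random variables with strictly linear regressions
on each other (`a₁ b₁ ≠ 0`), yet `R(X,Y) > |ρ(X,Y)| > 0`: strictly linear regression in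
both directions does not imply that the maximal correlation equals the absolute Pearson
correlation. -/
theorem stmt11 :
    ∃ (μ : Measure (ℝ × ℝ)) (_ : IsProbabilityMeasure μ) (a₁ a₀ b₁ b₀ : ℝ),
      a₁ * b₁ ≠ 0 ∧
      (μ[(fun p => p.1) | MeasurableSpace.comap (fun p : ℝ × ℝ => p.2) inferInstance]
          =ᵐ[μ] fun p => a₁ * p.2 + a₀) ∧
      (μ[(fun p => p.2) | MeasurableSpace.comap (fun p : ℝ × ℝ => p.1) inferInstance]
          =ᵐ[μ] fun p => b₁ * p.1 + b₀) ∧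
      |pearson μ (fun p => p.1) (fun p => p.2)| <
        maxCorr μ (fun p => p.1) (fun p => p.2) ∧
      0 < |pearson μ (fun p => p.1) (fun p => p.2)| := by
  refine ⟨m0, inferInstance, 1/2, 0, 1/2, 0, by norm_num, condexp_X, condexp_Y, ?_, ?_⟩
  · rw [pearson_XY]
    unfold maxCorr
    have hc1 : ((fun x : ℝ => x ^ 2) ∘ fun p : ℝ × ℝ => p.1) = fun p : ℝ × ℝ => p.1 ^ 2 := rfl
    have hc2 : ((fun x : ℝ => x ^ 2) ∘ fun p : ℝ × ℝ => p.2) = fun p : ℝ × ℝ => p.2 ^ 2 := rfl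
    have h1 : (1 : ℝ) ∈ { r : ℝ | ∃ g₁ g₂ : ℝ → ℝ, Measurable g₁ ∧ Measurable g₂ ∧
        MemLp (g₁ ∘ fun p : ℝ × ℝ => p.1) 2 m0 ∧ MemLp (g₂ ∘ fun p : ℝ × ℝ => p.2) 2 m0 ∧
        0 < variance (g₁ ∘ fun p : ℝ × ℝ => p.1) m0 ∧
        0 < variance (g₂ ∘ fun p : ℝ × ℝ => p.2) m0 ∧
        r = pearson m0 (g₁ ∘ fun p : ℝ × ℝ => p.1) (g₂ ∘ fun p : ℝ × ℝ => p.2) } := by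
      refine ⟨fun x => x ^ 2, fun x => x ^ 2, by measurability, by measurability, ?_, ?_, ?_, ?_, ?_⟩
      · rw [hc1]; exact memL2_m0 _ meas_X2.aestronglyMeasurable
      · rw [hc2]; exact memL2_m0 _ meas_Y2.aestronglyMeasurable
      · rw [hc1, var_X2]; norm_num
      · rw [hc2, var_Y2]; norm_num
      · rw [hc1, hc2, pearson_sq]
    have hbdd : BddAbove { r : ℝ | ∃ g₁ g₂ : ℝ → ℝ, Measurable g₁ ∧ Measurable g₂ ∧
        MemLp (g₁ ∘ fun p : ℝ × ℝ => p.1) 2 m0 ∧ MemLp (g₂ ∘ fun p : ℝ × ℝ => p.2) 2 m0 ∧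
        0 < variance (g₁ ∘ fun p : ℝ × ℝ => p.1) m0 ∧
        0 < variance (g₂ ∘ fun p : ℝ × ℝ => p.2) m0 ∧
        r = pearson m0 (g₁ ∘ fun p : ℝ × ℝ => p.1) (g₂ ∘ fun p : ℝ × ℝ => p.2) } := by
      refine ⟨1, ?_⟩
      rintro r ⟨g₁, g₂, _, _, hm1, hm2, _, _, rfl⟩
      exact (abs_le.mp (abs_pearson_le_one m0 _ _ hm1 hm2)).2
    have hle : (1 : ℝ) ≤ sSup _ := le_csSup hbdd h1
    calc |((1:ℝ)/2)| = 1/2 := by norm_num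
      _ < 1 := by norm_num
      _ ≤ _ := hle
  · rw [pearson_XY]; norm_num
end
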